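/- arXiv:1011.1086 — 5 statements merged into one kernel-verified Lean document; each statement's English description precedes it below -/
import Mathlib

section
/- For every real p > 2 there exists a constant C > 0 such that, setting θ = p/(2p−2), every f ∈ L^p(S², σ) satisfies ‖G(f)‖_{L^∞(S²,σ)} ≤ C ‖f‖_{L^p(S²,σ)}^θ · ‖f‖_{L^1(S²,σ)}^{1−θ}. -/
open MeasureTheory Metric Filter
open scoped NNReal ENNReal

noncomputable section

/-- The ambient Euclidean space `ℝ³`. -/
abbrev E3 : Type := EuclideanSpace ℝ (Fin 3)

/-- The surface measure on the unit sphere `S² ⊂ ℝ³`: the 2-dimensional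
Hausdorff measure restricted to the sphere. -/
def sphereMeasure : Measure E3 := (μH[2]).restrict (sphere (0 : E3) 1)

/-- The operator `G`: `G(f)(x) = (1/(4π)) ∫_{S²} f(y)/‖x−y‖ dσ(y)`. -/
def Gop (f : E3 → ℝ) (x : E3) : ℝ :=
  (1 / (4 * Real.pi)) * ∫ y, f y / ‖x - y‖ ∂sphereMeasure


/-! ### Auxiliary definitions and lemmas -/

def e3 : E3 := (WithLp.equiv 2 (Fin 3 → ℝ)).symm ![0, 0, 1]

lemma e3_norm : ‖e3‖ = 1 := by
  simp [e3, EuclideanSpace.norm_eq, PiLp.toLp_apply, Fin.sum_univ_three]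

def gr (u : Fin 2 → ℝ) : ℝ := Real.sqrt (1 - ((u 0)^2 + (u 1)^2))

def ψm (u : Fin 2 → ℝ) : E3 := (WithLp.equiv 2 (Fin 3 → ℝ)).symm ![u 0, u 1, gr u]

-- difference bound for gr on the disk of radius^2 3/4
lemma gr_diff {u v : Fin 2 → ℝ} (hu : (u 0)^2 + (u 1)^2 ≤ 3/4) (hv : (v 0)^2 + (v 1)^2 ≤ 3/4) :
    |gr u - gr v| ≤ 2 * |u 0 - v 0| + 2 * |u 1 - v 1| := by
  set a := (u 0)^2 + (u 1)^2
  set b := (v 0)^2 + (v 1)^2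
  have ha : 0 ≤ a := by positivity
  have hb : 0 ≤ b := by positivity
  have h1 : (1:ℝ)/2 ≤ gr u := by
    rw [gr]
    rw [show (1:ℝ)/2 = Real.sqrt (1/4) by rw [show (1:ℝ)/4 = (1/2)^2 by norm_num, Real.sqrt_sq]; norm_num]
    exact Real.sqrt_le_sqrt (by linarith)
  have h2 : (1:ℝ)/2 ≤ gr v := by
    rw [gr]
    rw [show (1:ℝ)/2 = Real.sqrt (1/4) by rw [show (1:ℝ)/4 = (1/2)^2 by norm_num, Real.sqrt_sq]; norm_num]
    exact Real.sqrt_le_sqrt (by linarith)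
  have hsq : (gr u - gr v) * (gr u + gr v) = b - a := by
    have : gr u ^ 2 = 1 - a := Real.sq_sqrt (by linarith)
    have h2' : gr v ^ 2 = 1 - b := Real.sq_sqrt (by linarith)
    nlinarith [this, h2']
  have hden : 1 ≤ gr u + gr v := by linarith
  have habs : |gr u - gr v| * 1 ≤ |gr u - gr v| * (gr u + gr v) :=
    mul_le_mul_of_nonneg_left hden (abs_nonneg _)
  have : |gr u - gr v| * (gr u + gr v) = |b - a| := by
    rw [← abs_of_nonneg (by linarith : (0:ℝ) ≤ gr u + gr v), ← abs_mul, hsq]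
  have hba : |b - a| ≤ 2 * |u 0 - v 0| + 2 * |u 1 - v 1| := by
    have e : b - a = (v 0 + u 0) * (v 0 - u 0) + (v 1 + u 1) * (v 1 - u 1) := by ring
    have h0 : |u 0| ≤ 1 := by nlinarith [sq_nonneg (u 1), abs_nonneg (u 0), sq_abs (u 0)]
    have h0' : |v 0| ≤ 1 := by nlinarith [sq_nonneg (v 1), abs_nonneg (v 0), sq_abs (v 0)]
    have h1' : |u 1| ≤ 1 := by nlinarith [sq_nonneg (u 0), abs_nonneg (u 1), sq_abs (u 1)]
    have h1'' : |v 1| ≤ 1 := by nlinarith [sq_nonneg (v 0), abs_nonneg (v 1), sq_abs (v 1)]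
    calc |b - a| ≤ |(v 0 + u 0) * (v 0 - u 0)| + |(v 1 + u 1) * (v 1 - u 1)| := by
          rw [e]; exact abs_add_le _ _
      _ ≤ 2 * |u 0 - v 0| + 2 * |u 1 - v 1| := by
          rw [abs_mul, abs_mul, abs_sub_comm (v 0), abs_sub_comm (v 1)]
          have e0 : |v 0 + u 0| ≤ 2 := (abs_add_le _ _).trans (by linarith)
          have e1 : |v 1 + u 1| ≤ 2 := (abs_add_le _ _).trans (by linarith)
          gcongr
  linarith [habs, this ▸ habs]

def Dset : Set (Fin 2 → ℝ) := {u | (u 0)^2 + (u 1)^2 ≤ 3/4}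



lemma psi_lip : LipschitzOnWith 6 ψm Dset := by
  apply LipschitzOnWith.of_dist_le_mul
  intro u hu v hv
  have hg := gr_diff hu hv
  have h0 : |u 0 - v 0| ≤ dist u v := by
    simpa [Real.dist_eq] using dist_le_pi_dist u v 0
  have h1 : |u 1 - v 1| ≤ dist u v := by
    simpa [Real.dist_eq] using dist_le_pi_dist u v 1
  have hd : dist (ψm u) (ψm v) ≤ |u 0 - v 0| + |u 1 - v 1| + |gr u - gr v| := by
    rw [EuclideanSpace.dist_eq]
    have : ∑ i, dist (ψm u i) (ψm v i) ^ 2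
        = (u 0 - v 0)^2 + (u 1 - v 1)^2 + (gr u - gr v)^2 := by
      simp [ψm, PiLp.toLp_apply, Fin.sum_univ_three, Real.dist_eq, sq_abs]
    rw [this]
    have hnn : (0:ℝ) ≤ |u 0 - v 0| + |u 1 - v 1| + |gr u - gr v| := by positivity
    rw [show |u 0 - v 0| + |u 1 - v 1| + |gr u - gr v|
        = Real.sqrt ((|u 0 - v 0| + |u 1 - v 1| + |gr u - gr v|)^2) by rw [Real.sqrt_sq hnn]]
    apply Real.sqrt_le_sqrt
    nlinarith [abs_nonneg (u 0 - v 0), abs_nonneg (u 1 - v 1), abs_nonneg (gr u - gr v),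
      sq_abs (u 0 - v 0), sq_abs (u 1 - v 1), sq_abs (gr u - gr v),
      mul_nonneg (abs_nonneg (u 0 - v 0)) (abs_nonneg (u 1 - v 1)),
      mul_nonneg (abs_nonneg (u 0 - v 0)) (abs_nonneg (gr u - gr v)),
      mul_nonneg (abs_nonneg (u 1 - v 1)) (abs_nonneg (gr u - gr v))]
  calc dist (ψm u) (ψm v) ≤ |u 0 - v 0| + |u 1 - v 1| + |gr u - gr v| := hd
    _ ≤ dist u v + dist u v + (2 * dist u v + 2 * dist u v) := by
        have := hg.trans (by linarith : 2 * |u 0 - v 0| + 2 * |u 1 - v 1| ≤ 2 * dist u v + 2 * dist u v)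
        linarith
    _ = (6:ℝ≥0) * dist u v := by push_cast; ring

-- north cap bound
lemma north_cap {r : ℝ} (hr0 : 0 < r) (hr1 : r ≤ 1) :
    μH[2] (sphere (0:E3) 1 ∩ closedBall e3 r) ≤ ENNReal.ofReal (144 * r^2) := by
  set Dr : Set (Fin 2 → ℝ) := {u | (u 0)^2 + (u 1)^2 ≤ 3/4 ∧ (u 0)^2 + (u 1)^2 ≤ r^2} with hDr
  have hsub : sphere (0:E3) 1 ∩ closedBall e3 r ⊆ ψm '' Dr := by
    rintro y ⟨hy1, hy2⟩
    have hy1' : (y 0)^2 + (y 1)^2 + (y 2)^2 = 1 := by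
      have : ‖y‖ = 1 := by simpa using hy1
      have h2 := congrArg (· ^ 2) this
      simp only [EuclideanSpace.norm_eq, Fin.sum_univ_three] at h2
      rw [Real.sq_sqrt (by positivity)] at h2
      simpa using h2
    have hdist : (y 0)^2 + (y 1)^2 + (y 2 - 1)^2 ≤ r^2 := by
      have : dist y e3 ≤ r := by simpa using hy2
      have h2 : dist y e3 ^ 2 ≤ r ^ 2 := by
        apply sq_le_sq' <;> [linarith [dist_nonneg (x := y) (y := e3)]; assumption]
      rw [EuclideanSpace.dist_eq] at h2
      rw [Real.sq_sqrt (by positivity)] at h2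
      simpa [e3, PiLp.toLp_apply, Fin.sum_univ_three, Real.dist_eq, sq_abs] using h2
    have hz : 1 - r^2/2 ≤ y 2 := by nlinarith
    have hz2 : (1:ℝ)/2 ≤ y 2 := by nlinarith
    refine ⟨![y 0, y 1], ⟨?_, ?_⟩, ?_⟩
    · show (y 0)^2 + (y 1)^2 ≤ 3/4; nlinarith
    · show (y 0)^2 + (y 1)^2 ≤ r^2; nlinarith
    · have hgr : gr ![y 0, y 1] = y 2 := by
        rw [gr]
        simp only [Matrix.cons_val_zero, Matrix.cons_val_one, Matrix.head_cons]
        rw [show 1 - ((y 0)^2 + (y 1)^2) = (y 2)^2 by linarith]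
        exact Real.sqrt_sq (by linarith)
      apply PiLp.ext
      intro i
      fin_cases i <;> simp [ψm, PiLp.toLp_apply, hgr]
  have hDsub : Dr ⊆ Dset := fun u hu => hu.1
  have hlip : LipschitzOnWith 6 ψm Dr := psi_lip.mono hDsub
  calc μH[2] (sphere (0:E3) 1 ∩ closedBall e3 r) ≤ μH[2] (ψm '' Dr) := measure_mono hsub
    _ ≤ (6:ℝ≥0) ^ (2:ℝ) * μH[2] Dr := hlip.hausdorffMeasure_image_le (by norm_num)
    _ ≤ (6:ℝ≥0) ^ (2:ℝ) * ENNReal.ofReal (4 * r^2) := by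
        gcongr
        have : μH[2] Dr = volume Dr := by
          rw [← MeasureTheory.hausdorffMeasure_pi_real (ι := Fin 2)]; norm_num
        rw [this]
        have hsub2 : Dr ⊆ Set.univ.pi (fun _ : Fin 2 => Set.Icc (-r) r) := by
          intro u hu i _
          have h2 := hu.2
          have hsq : (u i)^2 ≤ r^2 := by
            fin_cases i
            · show (u 0)^2 ≤ r^2; nlinarith [sq_nonneg (u 1)]
            · show (u 1)^2 ≤ r^2; nlinarith [sq_nonneg (u 0)]
          constructor <;> nlinarith
        calc volume Dr ≤ volume (Set.univ.pi fun _ : Fin 2 => Set.Icc (-r) r) := measure_mono hsub2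
          _ = ∏ _i : Fin 2, volume (Set.Icc (-r) r) := volume_pi_pi _
          _ = ENNReal.ofReal (4 * r^2) := by
              rw [Real.volume_Icc, Finset.prod_const, Finset.card_univ, Fintype.card_fin,
                ← ENNReal.ofReal_pow (by linarith)]
              congr 1; ring
    _ = ENNReal.ofReal (144 * r^2) := by
        have h6 : ((6:ℝ≥0):ℝ≥0∞) ^ (2:ℝ) = ENNReal.ofReal 36 := by
          rw [show (2:ℝ) = ((2:ℕ):ℝ) by norm_num, ENNReal.rpow_natCast, ENNReal.ofReal_ofNat]
          norm_num
        rw [h6, ← ENNReal.ofReal_mul (by norm_num)]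
        congr 1; ring

lemma cap_bound {x : E3} (hx : x ∈ sphere (0:E3) 1) {r : ℝ} (hr0 : 0 < r) (hr1 : r ≤ 1) :
    μH[2] (sphere (0:E3) 1 ∩ closedBall x r) ≤ ENNReal.ofReal (144 * r^2) := by
  have hxn : ‖x‖ = 1 := by simpa using hx
  set R : E3 ≃ₗᵢ[ℝ] E3 := Submodule.reflection (ℝ ∙ (e3 - x))ᗮ with hR
  have hRe3 : R e3 = x := Submodule.reflection_sub (by rw [e3_norm, hxn])
  set Ri := R.toIsometryEquiv with hRi
  have hRic : (Ri : E3 → E3) = R := rfl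
  have himg : Ri '' (sphere (0:E3) 1 ∩ closedBall e3 r) = sphere (0:E3) 1 ∩ closedBall x r := by
    rw [Set.image_inter Ri.injective, Ri.image_sphere, Ri.image_closedBall]
    rw [hRic, hRe3, show R 0 = 0 from map_zero R]
  calc μH[2] (sphere (0:E3) 1 ∩ closedBall x r)
      = μH[2] (Ri '' (sphere (0:E3) 1 ∩ closedBall e3 r)) := by rw [himg]
    _ = μH[2] (sphere (0:E3) 1 ∩ closedBall e3 r) := Ri.hausdorffMeasure_image _ _
    _ ≤ ENNReal.ofReal (144 * r^2) := north_cap hr0 hr1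

def vpm (p : Fin 3 × Bool) : E3 :=
  (WithLp.equiv 2 (Fin 3 → ℝ)).symm (fun j => if j = p.1 then (if p.2 then 1 else -1) else 0)

lemma vpm_sphere (p : Fin 3 × Bool) : vpm p ∈ sphere (0:E3) 1 := by
  simp only [mem_sphere_iff_norm, sub_zero]
  rw [EuclideanSpace.norm_eq]
  have : ∀ j, ((WithLp.equiv 2 (Fin 3 → ℝ)).symm
      (fun j => if j = p.1 then (if p.2 then (1:ℝ) else -1) else 0)) j
      = if j = p.1 then (if p.2 then (1:ℝ) else -1) else 0 := fun j => rfl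
  rw [show ∑ j, ‖vpm p j‖ ^ 2 = ∑ j, (if j = p.1 then (1:ℝ) else 0) by
    apply Finset.sum_congr rfl; intro j _
    rw [Real.norm_eq_abs, sq_abs, vpm, this j]
    split
    · split <;> norm_num
    · norm_num]
  rw [Finset.sum_ite_eq' Finset.univ p.1]
  simp

lemma sphere_cover {y : E3} (hy : y ∈ sphere (0:E3) 1) : ∃ p, y ∈ closedBall (vpm p) 1 := by
  have hn : (y 0)^2 + (y 1)^2 + (y 2)^2 = 1 := by
    have : ‖y‖ = 1 := by simpa using hy
    have h2 := congrArg (· ^ 2) this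
    simp only [EuclideanSpace.norm_eq, Fin.sum_univ_three] at h2
    rw [Real.sq_sqrt (by positivity)] at h2
    simpa [sq_abs] using h2
  have key : ∀ i : Fin 3, 1/4 ≤ (y i)^2 → ∃ p, y ∈ closedBall (vpm p) 1 := by
    intro i hi
    refine ⟨(i, decide (0 ≤ y i)), ?_⟩
    have habs : 1/2 ≤ |y i| := by
      nlinarith [abs_nonneg (y i), sq_abs (y i)]
    simp only [mem_closedBall]
    have hd2 : dist y (vpm (i, decide (0 ≤ y i))) ^ 2 = 2 - 2 * |y i| := by
      rw [EuclideanSpace.dist_eq, Real.sq_sqrt (by positivity)]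
      have hc : ∀ j, (vpm (i, decide (0 ≤ y i))) j
          = if j = i then (if 0 ≤ y i then (1:ℝ) else -1) else 0 := by
        intro j; rw [vpm]; simp only [decide_eq_true_eq]; rfl
      have : ∑ j, dist (y j) (vpm (i, decide (0 ≤ y i)) j) ^ 2
          = ∑ j, ((y j)^2 - (if j = i then 2 * (y i) * (if 0 ≤ y i then (1:ℝ) else -1) - 1 else 0)) := by
        apply Finset.sum_congr rfl; intro j _
        rw [hc j, Real.dist_eq, sq_abs]
        by_cases hj : j = i
        · subst hj; simp only [eq_self_iff_true, if_true]
          have hsq : ((if 0 ≤ y j then (1:ℝ) else -1))^2 = 1 := by split <;> norm_num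
          nlinarith [hsq]
        · simp [hj]
      rw [this, Finset.sum_sub_distrib, Finset.sum_ite_eq' Finset.univ i]
      simp only [Finset.mem_univ, if_true, Fin.sum_univ_three]
      have habs' : y i * (if 0 ≤ y i then (1:ℝ) else -1) = |y i| := by
        split <;> [rw [abs_of_nonneg ‹_›]; rw [abs_of_neg (by linarith [lt_of_not_ge ‹¬ 0 ≤ y i›])]] <;> ring
      rw [show (2:ℝ) * y i * (if 0 ≤ y i then (1:ℝ) else -1) = 2 * |y i| by rw [mul_assoc, habs']]
      linarith [hn]
    have : dist y (vpm (i, decide (0 ≤ y i))) ^ 2 ≤ 1 := by rw [hd2]; linarith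
    nlinarith [dist_nonneg (x := y) (y := vpm (i, decide (0 ≤ y i)))]
  by_cases h0 : 1/4 ≤ (y 0)^2
  · exact key 0 h0
  by_cases h1 : 1/4 ≤ (y 1)^2
  · exact key 1 h1
  have h2 : 1/4 ≤ (y 2)^2 := by nlinarith [lt_of_not_ge h0, lt_of_not_ge h1]
  exact key 2 h2

lemma total_bound : μH[2] (sphere (0:E3) 1) ≤ ENNReal.ofReal 864 := by
  have hcover : sphere (0:E3) 1 ⊆ ⋃ p : Fin 3 × Bool, (sphere (0:E3) 1 ∩ closedBall (vpm p) 1) := by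
    intro y hy
    obtain ⟨p, hp⟩ := sphere_cover hy
    exact Set.mem_iUnion.mpr ⟨p, hy, hp⟩
  calc μH[2] (sphere (0:E3) 1)
      ≤ μH[2] (⋃ p : Fin 3 × Bool, (sphere (0:E3) 1 ∩ closedBall (vpm p) 1)) := measure_mono hcover
    _ ≤ ∑' p : Fin 3 × Bool, μH[2] (sphere (0:E3) 1 ∩ closedBall (vpm p) 1) := measure_iUnion_le _
    _ ≤ ∑' _p : Fin 3 × Bool, ENNReal.ofReal 144 := by
        apply ENNReal.tsum_le_tsum
        intro p
        simpa using cap_bound (vpm_sphere p) one_pos le_rfl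
    _ = ENNReal.ofReal 864 := by
        rw [tsum_fintype, Finset.sum_const, Finset.card_univ]
        simp only [Fintype.card_prod, Fintype.card_fin, Fintype.card_bool]
        rw [show (3 * 2) • ENNReal.ofReal 144 = 6 * ENNReal.ofReal 144 by
          rw [nsmul_eq_mul]; norm_num]
        rw [show (6:ℝ≥0∞) = ENNReal.ofReal 6 by simp, ← ENNReal.ofReal_mul (by norm_num)]
        norm_num

lemma ball_bound {x : E3} (hx : x ∈ sphere (0:E3) 1) {r : ℝ} (hr0 : 0 < r) :
    sphereMeasure (closedBall x r) ≤ ENNReal.ofReal (864 * r^2) := by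
  rw [sphereMeasure, Measure.restrict_apply measurableSet_closedBall]
  rcases le_or_gt r 1 with hr1 | hr1
  · calc μH[2] (closedBall x r ∩ sphere (0:E3) 1)
        = μH[2] (sphere (0:E3) 1 ∩ closedBall x r) := by rw [Set.inter_comm]
      _ ≤ ENNReal.ofReal (144 * r^2) := cap_bound hx hr0 hr1
      _ ≤ ENNReal.ofReal (864 * r^2) := by apply ENNReal.ofReal_le_ofReal; nlinarith
  · calc μH[2] (closedBall x r ∩ sphere (0:E3) 1) ≤ μH[2] (sphere (0:E3) 1) :=
        measure_mono Set.inter_subset_right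
      _ ≤ ENNReal.ofReal 864 := total_bound
      _ ≤ ENNReal.ofReal (864 * r^2) := by apply ENNReal.ofReal_le_ofReal; nlinarith

lemma singleton_null {x : E3} (hx : x ∈ sphere (0:E3) 1) : sphereMeasure {x} = 0 := by
  have h0 : Tendsto (fun n : ℕ => ENNReal.ofReal (864 * (1/(n+1))^2)) atTop (nhds 0) := by
    rw [show (0:ℝ≥0∞) = ENNReal.ofReal 0 by simp]
    apply ENNReal.tendsto_ofReal
    have := tendsto_one_div_add_atTop_nhds_zero_nat (𝕜 := ℝ)
    have h2 := (this.pow 2).const_mul (864:ℝ)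
    simpa using h2
  have hle : ∀ n : ℕ, sphereMeasure {x} ≤ ENNReal.ofReal (864 * (1/(n+1))^2) := by
    intro n
    have hpos : (0:ℝ) < 1/(n+1) := by positivity
    refine le_trans (measure_mono ?_) (ball_bound hx hpos)
    intro z hz
    simp only [Set.mem_singleton_iff] at hz
    subst hz
    exact mem_closedBall_self (by positivity)
  have := ge_of_tendsto' h0 hle
  simpa using this

-- ENNReal antitone rpow with neg exponent
lemma ennreal_rpow_neg_antitone {a b : ℝ≥0∞} {q : ℝ} (hq : 0 ≤ q) (hab : a ≤ b) :
    b ^ (-q) ≤ a ^ (-q) := by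
  rw [ENNReal.rpow_neg, ENNReal.rpow_neg]
  exact ENNReal.inv_le_inv.mpr (ENNReal.rpow_le_rpow hab hq)

lemma real_calc (q r : ℝ) (hr : 0 < r) (j : ℕ) :
    (r/2^(j+1))^(-q) * (864*(r/2^j)^2) = 864 * (2:ℝ)^q * r^((2:ℝ)-q) * ((2:ℝ)^(q-2))^j := by
  have h2 : (0:ℝ) < 2 := two_pos
  have hpj : (0:ℝ) < 2^j := by positivity
  have hpj1 : (0:ℝ) < (2:ℝ)^(j+1) := by positivity
  have hd : (0:ℝ) < r / 2^(j+1) := by positivity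
  have l1 : (r/2^(j+1))^(-q) = Real.exp ((Real.log r - (j+1) * Real.log 2) * (-q)) := by
    rw [Real.rpow_def_of_pos hd, Real.log_div hr.ne' hpj1.ne', Real.log_pow]; push_cast; ring_nf
  have l2 : (864*(r/2^j)^2 : ℝ) = 864 * Real.exp (2*Real.log r - 2*j*Real.log 2) := by
    congr 1
    rw [← Real.rpow_natCast (r/2^j) 2, Real.rpow_def_of_pos (by positivity),
      Real.log_div hr.ne' hpj.ne', Real.log_pow]
    congr 1; push_cast; ring
  have l3 : (2:ℝ)^q = Real.exp (Real.log 2 * q) := Real.rpow_def_of_pos h2 q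
  have l4 : r^((2:ℝ)-q) = Real.exp (Real.log r * (2 - q)) := Real.rpow_def_of_pos hr _
  have l5 : ((2:ℝ)^(q-2))^j = Real.exp (Real.log 2 * (q-2) * j) := by
    rw [Real.rpow_def_of_pos h2, ← Real.exp_nat_mul]; congr 1; ring
  rw [l1, l2, l3, l4, l5]
  rw [show ∀ a b : ℝ, Real.exp a * (864 * Real.exp b) = 864 * Real.exp (a + b) from
    fun a b => by rw [Real.exp_add]; ring]
  rw [show (864 : ℝ) * Real.exp (Real.log 2 * q) * Real.exp (Real.log r * (2-q)) *
      Real.exp (Real.log 2 * (q-2) * j)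
      = 864 * Real.exp (Real.log 2 * q + Real.log r * (2-q) + Real.log 2 * (q-2) * j) from by
    rw [Real.exp_add, Real.exp_add]; ring]
  congr 1
  ring

lemma kernel_bound (q : ℝ) (hq1 : 1 < q) (hq2 : q < 2) :
    ∃ S : ℝ≥0∞, S ≠ ⊤ ∧ ∀ x ∈ sphere (0:E3) 1, ∀ r : ℝ, 0 < r →
      ∫⁻ y in closedBall x r, (ENNReal.ofReal ‖x - y‖) ^ (-q) ∂sphereMeasure ≤
        S * ENNReal.ofReal (r ^ ((2:ℝ) - q)) := by
  set b : ℝ≥0∞ := ENNReal.ofReal ((2:ℝ) ^ (q - 2)) with hb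
  have hblt : b < 1 := by
    rw [hb, show (1:ℝ≥0∞) = ENNReal.ofReal 1 by simp]
    exact (ENNReal.ofReal_lt_ofReal_iff one_pos).mpr
      (Real.rpow_lt_one_of_one_lt_of_neg one_lt_two (by linarith))
  refine ⟨ENNReal.ofReal (864 * (2:ℝ)^q) * (1 - b)⁻¹, ?_, ?_⟩
  · apply ENNReal.mul_ne_top ENNReal.ofReal_ne_top
    rw [Ne, ENNReal.inv_eq_top]
    exact (tsub_pos_of_lt hblt).ne'
  intro x hx r hr
  set K : E3 → ℝ≥0∞ := fun y => (ENNReal.ofReal ‖x - y‖) ^ (-q) with hK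
  set A : ℕ → Set E3 := fun j => {y | dist x y ≤ r/2^j ∧ r/2^(j+1) < dist x y} with hA
  -- step 1: reduce to ball minus the singleton
  have hstep1 : ∫⁻ y in closedBall x r, K y ∂sphereMeasure
      = ∫⁻ y in closedBall x r \ {x}, K y ∂sphereMeasure := by
    refine (setLIntegral_congr ?_).symm
    rw [MeasureTheory.diff_ae_eq_self]
    exact measure_mono_null Set.inter_subset_right (singleton_null hx)
  -- step 2: covering
  have hcov : closedBall x r \ {x} ⊆ ⋃ j : ℕ, A j := by
    rintro y ⟨hy1, hy2⟩
    have hd0 : 0 < dist x y := by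
      rw [dist_pos]; intro h; exact hy2 (by simp [h.symm])
    have hdr : dist x y ≤ r := by rwa [dist_comm, ← mem_closedBall]
    set s := Real.logb 2 (r / dist x y) with hs
    have hratio : 1 ≤ r / dist x y := (one_le_div hd0).mpr hdr
    have hs0 : 0 ≤ s := Real.logb_nonneg one_lt_two hratio
    set j := Nat.floor s with hj
    refine Set.mem_iUnion.mpr ⟨j, ?_, ?_⟩
    · have h1 : (2:ℝ)^(j:ℝ) ≤ (2:ℝ)^s :=
        Real.rpow_le_rpow_of_exponent_le one_le_two (Nat.floor_le hs0)
      rw [Real.rpow_logb two_pos (by norm_num) (by positivity)] at h1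
      rw [Real.rpow_natCast] at h1
      have h2 : (2:ℝ)^j * dist x y ≤ r := by
        calc (2:ℝ)^j * dist x y ≤ (r / dist x y) * dist x y :=
            mul_le_mul_of_nonneg_right h1 dist_nonneg
          _ = r := by field_simp
      show dist x y ≤ r / 2^j
      rw [le_div_iff₀ (by positivity)]
      linarith [h2]
    · have h1 : (2:ℝ)^s < (2:ℝ)^((j:ℝ)+1) := by
        apply Real.rpow_lt_rpow_of_exponent_lt one_lt_two
        exact_mod_cast Nat.lt_floor_add_one s
      rw [Real.rpow_logb two_pos (by norm_num) (by positivity)] at h1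
      rw [show ((j:ℝ)+1) = ((j+1:ℕ):ℝ) by push_cast; ring, Real.rpow_natCast] at h1
      rw [div_lt_iff₀ hd0] at h1
      show r / 2^(j+1) < dist x y
      rw [div_lt_iff₀ (by positivity)]
      linarith [h1]
  -- step 3: term bound
  have hterm : ∀ j : ℕ, ∫⁻ y in A j, K y ∂sphereMeasure ≤
      ENNReal.ofReal (864 * (2:ℝ)^q * r ^ ((2:ℝ)-q)) * b ^ j := by
    intro j
    have hrj : (0:ℝ) < r / 2^(j+1) := by positivity
    have hAmeas : MeasurableSet (A j) := by
      apply MeasurableSet.inter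
      · exact measurableSet_le (continuous_const.dist continuous_id).measurable measurable_const
      · exact measurableSet_lt measurable_const (continuous_const.dist continuous_id).measurable
    have hKb : ∀ y ∈ A j, K y ≤ ENNReal.ofReal ((r/2^(j+1)) ^ (-q)) := by
      intro y hy
      have h1 : ENNReal.ofReal (r/2^(j+1)) ≤ ENNReal.ofReal ‖x - y‖ := by
        apply ENNReal.ofReal_le_ofReal
        have := hy.2
        rw [dist_eq_norm] at this
        linarith
      calc K y ≤ (ENNReal.ofReal (r/2^(j+1))) ^ (-q) :=
          ennreal_rpow_neg_antitone (by linarith) h1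
        _ = ENNReal.ofReal ((r/2^(j+1)) ^ (-q)) := ENNReal.ofReal_rpow_of_pos hrj
    have hsub : A j ⊆ closedBall x (r/2^j) := by
      intro y hy
      rw [mem_closedBall, dist_comm]
      exact hy.1
    calc ∫⁻ y in A j, K y ∂sphereMeasure
        ≤ ∫⁻ _ in A j, ENNReal.ofReal ((r/2^(j+1)) ^ (-q)) ∂sphereMeasure :=
          setLIntegral_mono' hAmeas hKb
      _ = ENNReal.ofReal ((r/2^(j+1)) ^ (-q)) * sphereMeasure (A j) := setLIntegral_const _ _
      _ ≤ ENNReal.ofReal ((r/2^(j+1)) ^ (-q)) * ENNReal.ofReal (864 * (r/2^j)^2) := by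
          gcongr
          exact le_trans (measure_mono hsub) (ball_bound hx (by positivity))
      _ = ENNReal.ofReal (864 * (2:ℝ)^q * r ^ ((2:ℝ)-q)) * b ^ j := by
          rw [← ENNReal.ofReal_mul (by positivity), hb, ← ENNReal.ofReal_pow (by positivity),
            ← ENNReal.ofReal_mul (by positivity)]
          congr 1
          exact real_calc q r hr j
  calc ∫⁻ y in closedBall x r, (ENNReal.ofReal ‖x - y‖) ^ (-q) ∂sphereMeasure
      = ∫⁻ y in closedBall x r \ {x}, K y ∂sphereMeasure := hstep1
    _ ≤ ∫⁻ y in ⋃ j : ℕ, A j, K y ∂sphereMeasure := lintegral_mono_set hcov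
    _ ≤ ∑' j : ℕ, ∫⁻ y in A j, K y ∂sphereMeasure := lintegral_iUnion_le _ _
    _ ≤ ∑' j : ℕ, ENNReal.ofReal (864 * (2:ℝ)^q * r ^ ((2:ℝ)-q)) * b ^ j :=
        ENNReal.tsum_le_tsum hterm
    _ = ENNReal.ofReal (864 * (2:ℝ)^q * r ^ ((2:ℝ)-q)) * (1 - b)⁻¹ := by
        rw [ENNReal.tsum_mul_left, ENNReal.tsum_geometric]
    _ = ENNReal.ofReal (864 * (2:ℝ)^q) * (1 - b)⁻¹ * ENNReal.ofReal (r ^ ((2:ℝ)-q)) := by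
        rw [ENNReal.ofReal_mul (by positivity)]
        ring

lemma optimize {I Np N1 M : ℝ≥0∞} {a θ : ℝ} (ha : 0 < a) (hθ : θ = 1/(1+a))
    (hM0 : 0 < M) (hMt : M ≠ ⊤) (hNp0 : 0 < Np) (hNpt : Np ≠ ⊤)
    (hN10 : 0 < N1) (hN1t : N1 ≠ ⊤)
    (h : ∀ r : ℝ, 0 < r → I ≤ M * Np * (ENNReal.ofReal r)^a + (ENNReal.ofReal r)⁻¹ * N1) :
    I ≤ 2 * M^θ * Np^θ * N1^(1-θ) := by
  have hθ0 : 0 < θ := by rw [hθ]; positivity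
  have hθ1 : θ < 1 := by
    rw [hθ, div_lt_one (by linarith)]; linarith
  have hθa : θ * a = 1 - θ := by
    rw [hθ]; field_simp; ring
  set X : ℝ≥0∞ := M * Np with hX
  have hX0 : X ≠ 0 := by
    simp only [hX, mul_ne_zero_iff]; exact ⟨hM0.ne', hNp0.ne'⟩
  have hXt : X ≠ ⊤ := ENNReal.mul_ne_top hMt hNpt
  set ρ : ℝ≥0∞ := (N1 / X)^θ with hρ
  have hq0 : N1 / X ≠ 0 := by
    simp only [Ne, ENNReal.div_eq_zero_iff, not_or]
    exact ⟨hN10.ne', hXt⟩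
  have hqt : N1 / X ≠ ⊤ := by
    simp only [Ne, ENNReal.div_eq_top, not_or, not_and_or]
    exact ⟨Or.inr hX0, Or.inl hN1t⟩
  have hρ0 : ρ ≠ 0 := by
    simp only [hρ, Ne, ENNReal.rpow_eq_zero_iff, not_or, not_and_or]
    exact ⟨Or.inl hq0, Or.inl hqt⟩
  have hρt : ρ ≠ ⊤ := by
    simp only [hρ, Ne, ENNReal.rpow_eq_top_iff, not_or, not_and_or]
    exact ⟨Or.inl hq0, Or.inl hqt⟩
  have hofρ : ENNReal.ofReal ρ.toReal = ρ := ENNReal.ofReal_toReal hρt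
  have hρpos : 0 < ρ.toReal := ENNReal.toReal_pos hρ0 hρt
  have hkey := h ρ.toReal hρpos
  rw [hofρ] at hkey
  -- first term
  have hdiv : (N1 / X)^(1-θ) = N1^(1-θ) / X^(1-θ) := ENNReal.div_rpow_of_nonneg _ _ (by linarith)
  have hXsplit : X^θ * X^(1-θ) = X := by
    rw [← ENNReal.rpow_add _ _ hX0 hXt]; norm_num
  have h1 : X * ρ^a = X^θ * N1^(1-θ) := by
    rw [hρ, ← ENNReal.rpow_mul, hθa, hdiv]
    calc X * (N1^(1-θ) / X^(1-θ)) = X^θ * X^(1-θ) * (N1^(1-θ) / X^(1-θ)) := by rw [hXsplit]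
      _ = X^θ * (X^(1-θ) * (N1^(1-θ) / X^(1-θ))) := by ring
      _ = X^θ * N1^(1-θ) := by
          congr 1
          rw [mul_comm, ENNReal.div_mul_cancel]
          · simp only [Ne, ENNReal.rpow_eq_zero_iff, not_or, not_and_or]
            exact ⟨Or.inl hX0, Or.inr (by linarith)⟩
          · simp only [Ne, ENNReal.rpow_eq_top_iff, not_or, not_and_or]
            exact ⟨Or.inr (by linarith), Or.inl hXt⟩
  -- second term
  have h2 : ρ⁻¹ * N1 = X^θ * N1^(1-θ) := by
    rw [hρ, ← ENNReal.rpow_neg_one, ← ENNReal.rpow_mul]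
    rw [show θ * -1 = -θ by ring]
    rw [ENNReal.rpow_neg, ENNReal.div_rpow_of_nonneg _ _ hθ0.le]
    rw [ENNReal.inv_div (Or.inr (by
        simp only [Ne, ENNReal.rpow_eq_top_iff, not_or, not_and_or]
        exact ⟨Or.inl hN10.ne', Or.inl hN1t⟩))
      (Or.inr (by
        simp only [Ne, ENNReal.rpow_eq_zero_iff, not_or, not_and_or]
        exact ⟨Or.inl hN10.ne', Or.inl hN1t⟩))]
    rw [div_eq_mul_inv, mul_assoc]
    congr 1
    rw [← ENNReal.rpow_neg]
    nth_rewrite 2 [← ENNReal.rpow_one N1]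
    rw [← ENNReal.rpow_add _ _ hN10.ne' hN1t]
    congr 1
    ring
  calc I ≤ X * ρ^a + ρ⁻¹ * N1 := hkey
    _ = X^θ * N1^(1-θ) + X^θ * N1^(1-θ) := by rw [h1, h2]
    _ = 2 * X^θ * N1^(1-θ) := by ring
    _ = 2 * M^θ * Np^θ * N1^(1-θ) := by
        rw [hX, ENNReal.mul_rpow_of_nonneg _ _ hθ0.le]; ring

/-- For every `p > 2` there is `C > 0` such that, with
`θ = p/(2p−2)`, every `f ∈ L^p(S²,σ)` satisfies
`‖G(f)‖_{L^∞} ≤ C ‖f‖_{L^p}^θ ‖f‖_{L^1}^{1−θ}`. -/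
theorem Gop_Linfty_interpolation_bound (p : ℝ) (hp : 2 < p) :
    ∃ C : ℝ, 0 < C ∧ ∀ f : E3 → ℝ, MemLp f (ENNReal.ofReal p) sphereMeasure →
      eLpNorm (Gop f) ⊤ sphereMeasure ≤
        ENNReal.ofReal C *
          (eLpNorm f (ENNReal.ofReal p) sphereMeasure) ^ (p / (2 * p - 2)) *
          (eLpNorm f 1 sphereMeasure) ^ (1 - p / (2 * p - 2)) := by
  have hp1 : 1 < p := by linarith
  have hp0 : 0 < p := by linarith
  set q := Real.conjExponent p with hq
  have hpq : p.HolderConjugate q := Real.HolderConjugate.conjExponent hp1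
  have hq1 : 1 < q := hpq.symm.lt
  have hq2 : q < 2 := by
    rw [hq, Real.conjExponent, div_lt_iff₀ (by linarith)]; linarith
  obtain ⟨S, hSt, hS⟩ := kernel_bound q hq1 hq2
  set θ := p / (2 * p - 2) with hθdef
  set a := (p - 2) / p with ha
  have ha0 : 0 < a := by rw [ha]; exact div_pos (by linarith) hp0
  have hθeq : θ = 1 / (1 + a) := by
    rw [hθdef, ha, one_add_div hp0.ne', one_div_div, show p + (p - 2) = 2 * p - 2 by ring]
  have hθ0 : 0 < θ := by rw [hθdef]; exact div_pos hp0 (by linarith)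
  have hθ1 : θ < 1 := by
    rw [hθdef, div_lt_one (by linarith)]; linarith
  set M : ℝ≥0∞ := S ^ (1/q) + 1 with hM
  have hM0 : 0 < M := by
    rw [hM]; exact lt_of_lt_of_le one_pos le_add_self
  have hMt : M ≠ ⊤ := by
    rw [hM]
    apply ENNReal.add_ne_top.mpr
    refine ⟨?_, ENNReal.one_ne_top⟩
    exact ENNReal.rpow_ne_top_of_nonneg (by positivity) hSt
  have h2Mt : 2 * M ^ θ ≠ ⊤ :=
    ENNReal.mul_ne_top (by norm_num) (ENNReal.rpow_ne_top_of_nonneg hθ0.le hMt)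
  refine ⟨(2 * M ^ θ).toReal + 1, by positivity, ?_⟩
  intro f hf
  set Np := eLpNorm f (ENNReal.ofReal p) sphereMeasure with hNp
  set N1 := eLpNorm f 1 sphereMeasure with hN1
  have hCge : 2 * M ^ θ ≤ ENNReal.ofReal ((2 * M ^ θ).toReal + 1) := by
    calc 2 * M ^ θ = ENNReal.ofReal ((2 * M ^ θ).toReal) := (ENNReal.ofReal_toReal h2Mt).symm
      _ ≤ _ := ENNReal.ofReal_le_ofReal (by linarith [ENNReal.toReal_nonneg (a := 2 * M ^ θ)])
  have hofp0 : ENNReal.ofReal p ≠ 0 := by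
    rw [Ne, ENNReal.ofReal_eq_zero]; linarith
  have hofpt : ENNReal.ofReal p ≠ ⊤ := ENNReal.ofReal_ne_top
  by_cases hNp0 : Np = 0
  · -- f vanishes a.e.
    have hf0 : f =ᵐ[sphereMeasure] 0 := by
      rw [← eLpNorm_eq_zero_iff hf.1 hofp0]; exact hNp0
    have hG : Gop f = fun _ => (0:ℝ) := by
      funext x
      rw [Gop]
      have : (fun y => f y / ‖x - y‖) =ᵐ[sphereMeasure] 0 := by
        filter_upwards [hf0] with y hy
        simp [hy]
      rw [integral_congr_ae this]
      simp
    rw [hG]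
    rw [eLpNorm_zero']
    exact zero_le
  have hNp0' : 0 < Np := pos_iff_ne_zero.mpr hNp0
  have hNpt : Np ≠ ⊤ := hf.eLpNorm_ne_top
  by_cases hN1t : N1 = ⊤
  · rw [hN1t, ENNReal.top_rpow_of_pos (by linarith)]
    rw [ENNReal.mul_top]
    · exact le_top
    · apply mul_ne_zero
      · rw [Ne, ENNReal.ofReal_eq_zero]
        push_neg
        positivity
      · simp only [Ne, ENNReal.rpow_eq_zero_iff, not_or, not_and_or]
        exact ⟨Or.inl hNp0, Or.inr (by linarith)⟩
  have hN10 : N1 ≠ 0 := by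
    intro h0
    apply hNp0
    have hf0 : f =ᵐ[sphereMeasure] 0 := (eLpNorm_eq_zero_iff hf.1 one_ne_zero).mp h0
    rw [hNp, eLpNorm_congr_ae hf0, eLpNorm_zero]
  have hN10' : 0 < N1 := pos_iff_ne_zero.mpr hN10
  -- notation
  set F : E3 → ℝ≥0∞ := fun y => (‖f y‖₊ : ℝ≥0∞) with hF
  have hFmeas : AEMeasurable F sphereMeasure := hf.1.enorm
  have hNp_eq : Np = (∫⁻ y, F y ^ p ∂sphereMeasure) ^ (1/p) := by
    rw [hNp, eLpNorm_eq_lintegral_rpow_enorm_toReal hofp0 hofpt, ENNReal.toReal_ofReal hp0.le]; rfl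
  have hN1_eq : N1 = ∫⁻ y, F y ∂sphereMeasure := by
    rw [hN1, eLpNorm_one_eq_lintegral_enorm]; rfl
  -- pointwise bound
  have hae : ∀ x ∈ sphere (0:E3) 1, (‖Gop f x‖₊ : ℝ≥0∞) ≤ 2 * M^θ * Np^θ * N1^(1-θ) := by
    intro x hx
    set K : E3 → ℝ≥0∞ := fun y => (ENNReal.ofReal ‖x - y‖)⁻¹ with hK
    have hKmeas : Measurable K :=
      (((continuous_const.sub continuous_id).norm).measurable.ennreal_ofReal).inv
    set I := ∫⁻ y, F y * K y ∂sphereMeasure with hI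
    -- |Gop f x| ≤ I
    have hGle : (‖Gop f x‖₊ : ℝ≥0∞) ≤ I := by
      rw [Gop]
      calc ((‖(1 / (4 * Real.pi)) * ∫ y, f y / ‖x - y‖ ∂sphereMeasure‖₊ : ℝ≥0) : ℝ≥0∞)
          = (‖(1 / (4 * Real.pi))‖₊ : ℝ≥0∞) * (‖∫ y, f y / ‖x - y‖ ∂sphereMeasure‖₊ : ℝ≥0∞) := by
            rw [nnnorm_mul]; push_cast; ring
        _ ≤ 1 * (‖∫ y, f y / ‖x - y‖ ∂sphereMeasure‖₊ : ℝ≥0∞) := by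
            gcongr
            rw [← enorm_eq_nnnorm, ← ofReal_norm, Real.norm_eq_abs, abs_of_pos (by positivity),
              show (1:ℝ≥0∞) = ENNReal.ofReal 1 from ENNReal.ofReal_one.symm]
            apply ENNReal.ofReal_le_ofReal
            rw [div_le_one (by positivity)]
            linarith [Real.pi_gt_three]
        _ = (‖∫ y, f y / ‖x - y‖ ∂sphereMeasure‖₊ : ℝ≥0∞) := one_mul _
        _ ≤ ∫⁻ y, (‖f y / ‖x - y‖‖₊ : ℝ≥0∞) ∂sphereMeasure :=
            enorm_integral_le_lintegral_enorm _
        _ ≤ I := by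
            apply lintegral_mono
            intro y
            show (‖f y / ‖x - y‖‖₊ : ℝ≥0∞) ≤ F y * K y
            rw [← enorm_eq_nnnorm, ← ofReal_norm, Real.norm_eq_abs, abs_div, abs_norm]
            rcases eq_or_lt_of_le (norm_nonneg (x - y)) with h|h
            · rw [← h]
              simp
            · rw [div_eq_mul_inv, ENNReal.ofReal_mul (abs_nonneg _),
                ENNReal.ofReal_inv_of_pos h]
              apply le_of_eq
              congr 1
              show ENNReal.ofReal |f y| = (‖f y‖₊ : ℝ≥0∞)
              rw [← enorm_eq_nnnorm, ← ofReal_norm, Real.norm_eq_abs]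
    -- the two-scale bound
    have hIle : ∀ r : ℝ, 0 < r → I ≤ M * Np * (ENNReal.ofReal r)^a + (ENNReal.ofReal r)⁻¹ * N1 := by
      intro r hr
      have hsplit : I = (∫⁻ y in closedBall x r, F y * K y ∂sphereMeasure)
          + ∫⁻ y in (closedBall x r)ᶜ, F y * K y ∂sphereMeasure := by
        rw [hI, ← lintegral_add_compl (fun y => F y * K y) (measurableSet_closedBall (x := x) (ε := r))]
      -- near part
      have hnear : (∫⁻ y in closedBall x r, F y * K y ∂sphereMeasure)
          ≤ M * Np * (ENNReal.ofReal r)^a := by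
        have hhold := ENNReal.lintegral_mul_le_Lp_mul_Lq
          (sphereMeasure.restrict (closedBall x r)) hpq hFmeas.restrict hKmeas.aemeasurable
        have hfactor1 : (∫⁻ y in closedBall x r, F y ^ p ∂sphereMeasure) ^ (1/p) ≤ Np := by
          rw [hNp_eq]
          exact ENNReal.rpow_le_rpow (setLIntegral_le_lintegral _ _) (by positivity)
        have hfactor2 : (∫⁻ y in closedBall x r, K y ^ q ∂sphereMeasure) ^ (1/q)
            ≤ S^(1/q) * (ENNReal.ofReal r)^a := by
          have hKq : ∀ y, K y ^ q = (ENNReal.ofReal ‖x - y‖) ^ (-q) := by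
            intro y
            rw [hK, ENNReal.inv_rpow, ← ENNReal.rpow_neg]
          calc (∫⁻ y in closedBall x r, K y ^ q ∂sphereMeasure) ^ (1/q)
              = (∫⁻ y in closedBall x r, (ENNReal.ofReal ‖x - y‖) ^ (-q) ∂sphereMeasure) ^ (1/q) := by
                congr 1
                apply lintegral_congr
                intro y
                exact hKq y
            _ ≤ (S * ENNReal.ofReal (r ^ ((2:ℝ) - q))) ^ (1/q) :=
                ENNReal.rpow_le_rpow (hS x hx r hr) (by positivity)
            _ = S^(1/q) * (ENNReal.ofReal (r ^ ((2:ℝ) - q)))^(1/q) :=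
                ENNReal.mul_rpow_of_nonneg _ _ (by positivity)
            _ = S^(1/q) * (ENNReal.ofReal r)^a := by
                congr 1
                rw [ENNReal.ofReal_rpow_of_pos (Real.rpow_pos_of_pos hr _),
                  ENNReal.ofReal_rpow_of_pos hr, ← Real.rpow_mul hr.le]
                congr 1
                have hpne : p ≠ 0 := hp0.ne'
                have hp1ne : p - 1 ≠ 0 := by intro h; rw [sub_eq_zero] at h; linarith
                rw [ha, hq, Real.conjExponent]
                field_simp
                ring
        calc (∫⁻ y in closedBall x r, F y * K y ∂sphereMeasure)
            ≤ (∫⁻ y in closedBall x r, F y ^ p ∂sphereMeasure) ^ (1/p)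
              * (∫⁻ y in closedBall x r, K y ^ q ∂sphereMeasure) ^ (1/q) := hhold
          _ ≤ Np * (S^(1/q) * (ENNReal.ofReal r)^a) := mul_le_mul' hfactor1 hfactor2
          _ ≤ Np * (M * (ENNReal.ofReal r)^a) := by
              gcongr
              rw [hM]; exact le_self_add
          _ = M * Np * (ENNReal.ofReal r)^a := by ring
      -- far part
      have hfar : (∫⁻ y in (closedBall x r)ᶜ, F y * K y ∂sphereMeasure)
          ≤ (ENNReal.ofReal r)⁻¹ * N1 := by
        have hpt : ∀ y ∈ (closedBall x r)ᶜ, F y * K y ≤ F y * (ENNReal.ofReal r)⁻¹ := by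
          intro y hy
          gcongr
          rw [hK]
          apply ENNReal.inv_le_inv.mpr
          apply ENNReal.ofReal_le_ofReal
          have hlt : r < dist y x := by simpa [mem_closedBall] using hy
          rw [dist_comm] at hlt
          rw [← dist_eq_norm]
          linarith
        calc (∫⁻ y in (closedBall x r)ᶜ, F y * K y ∂sphereMeasure)
            ≤ ∫⁻ y in (closedBall x r)ᶜ, F y * (ENNReal.ofReal r)⁻¹ ∂sphereMeasure :=
              setLIntegral_mono' measurableSet_closedBall.compl hpt
          _ = (∫⁻ y in (closedBall x r)ᶜ, F y ∂sphereMeasure) * (ENNReal.ofReal r)⁻¹ :=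
              lintegral_mul_const' _ _ (by
                rw [Ne, ENNReal.inv_eq_top, ENNReal.ofReal_eq_zero]
                push_neg
                exact hr)
          _ ≤ N1 * (ENNReal.ofReal r)⁻¹ := by
              gcongr
              rw [hN1_eq]
              exact setLIntegral_le_lintegral _ _
          _ = (ENNReal.ofReal r)⁻¹ * N1 := mul_comm _ _
      calc I = _ + _ := hsplit
        _ ≤ M * Np * (ENNReal.ofReal r)^a + (ENNReal.ofReal r)⁻¹ * N1 := add_le_add hnear hfar
    exact hGle.trans (optimize ha0 hθeq hM0 hMt hNp0' hNpt hN10' hN1t hIle)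
  have hbound : eLpNorm (Gop f) ⊤ sphereMeasure ≤ 2 * M^θ * Np^θ * N1^(1-θ) := by
    rw [eLpNorm_exponent_top, eLpNormEssSup]
    refine essSup_le_of_ae_le _ ?_
    have hmem : ∀ᵐ x ∂sphereMeasure, x ∈ sphere (0:E3) 1 := by
      rw [sphereMeasure]
      exact ae_restrict_mem (Metric.isClosed_sphere.measurableSet)
    filter_upwards [hmem] with x hx
    exact hae x hx
  calc eLpNorm (Gop f) ⊤ sphereMeasure ≤ 2 * M^θ * Np^θ * N1^(1-θ) := hbound
    _ = (2 * M^θ) * Np^θ * N1^(1-θ) := by ring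
    _ ≤ ENNReal.ofReal ((2*M^θ).toReal + 1) * Np^θ * N1^(1-θ) := by gcongr
end
end

section
/- There exists a constant C > 0 such that for all real numbers r, r' > 0 and all unit vectors σ, σ' ∈ ℝ³ with σ ≠ σ', | 1/‖σ − σ'‖ − 1/‖rσ − r'σ'‖ | ≤ C (min(|r − 1|, 1) + min(|r' − 1|, 1)) (1 + 1/max(r, r')) / ‖σ − σ'‖². -/
noncomputable section

/-- The difference between the Coulomb kernel on the sphere
and the Coulomb kernel in `ℝ³`:
`|1/‖σ−σ'‖ − 1/‖rσ−r'σ'‖| ≤ C (min(|r−1|,1) + min(|r'−1|,1))(1 + 1/max(r,r'))/‖σ−σ'‖²`. -/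
theorem kernel_difference_bound :
    ∃ C : ℝ, 0 < C ∧ ∀ r r' : ℝ, 0 < r → 0 < r' →
      ∀ σ σ' : E3, ‖σ‖ = 1 → ‖σ'‖ = 1 → σ ≠ σ' →
        |1 / ‖σ - σ'‖ - 1 / ‖r • σ - r' • σ'‖| ≤
          C * (min |r - 1| 1 + min |r' - 1| 1) * (1 + 1 / max r r') / ‖σ - σ'‖ ^ 2 := by
  refine ⟨8, by norm_num, fun r r' hr hr' σ σ' hσ hσ' hne => ?_⟩
  set d := ‖σ - σ'‖ with hd_def
  set D := ‖r • σ - r' • σ'‖ with hD_def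
  set M := max r r' with hM_def
  set m := min |r - 1| 1 with hm_def
  set m' := min |r' - 1| 1 with hm'_def
  have hd : 0 < d := norm_pos_iff.2 (sub_ne_zero.2 hne)
  have hd2 : d ≤ 2 := by
    calc d ≤ ‖σ‖ + ‖σ'‖ := norm_sub_le _ _
    _ = 2 := by rw [hσ, hσ']; norm_num
  have hM : 0 < M := lt_max_of_lt_left hr
  have hD0 : 0 < D := by
    rw [hD_def, norm_pos_iff, sub_ne_zero]
    intro h
    have hrr : r = r' := by
      have := congrArg norm h
      simpa [norm_smul, hσ, hσ', abs_of_pos hr, abs_of_pos hr'] using this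
    rw [hrr] at h
    exact hne (smul_right_injective E3 hr'.ne' h)
  -- law of cosines
  have hsq : D ^ 2 = (r - r') ^ 2 + r * r' * d ^ 2 := by
    have e1 : D ^ 2 = ‖r • σ‖ ^ 2 - 2 * inner ℝ (r • σ) (r' • σ') + ‖r' • σ'‖ ^ 2 :=
      norm_sub_sq_real _ _
    have e2 : d ^ 2 = ‖σ‖ ^ 2 - 2 * inner ℝ σ σ' + ‖σ'‖ ^ 2 := norm_sub_sq_real _ _
    have e3 : (inner ℝ (r • σ) (r' • σ') : ℝ) = r * r' * inner ℝ σ σ' := by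
      rw [real_inner_smul_left, real_inner_smul_right]; ring
    rw [e3, norm_smul, norm_smul, hσ, hσ'] at e1
    rw [hσ, hσ'] at e2
    simp only [Real.norm_eq_abs, abs_of_pos hr, abs_of_pos hr'] at e1
    nlinarith [e1, e2]
  -- |D - d| ≤ |r-1| + |r'-1|
  have key : |D - d| ≤ |r - 1| + |r' - 1| := by
    have h1 : |D - d| ≤ ‖(r • σ - r' • σ') - (σ - σ')‖ := abs_norm_sub_norm_le _ _
    have h2 : (r • σ - r' • σ') - (σ - σ') = (r - 1) • σ - (r' - 1) • σ' := by
      module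
    rw [h2] at h1
    refine h1.trans ?_
    calc ‖(r - 1) • σ - (r' - 1) • σ'‖ ≤ ‖(r - 1) • σ‖ + ‖(r' - 1) • σ'‖ := norm_sub_le _ _
    _ = |r - 1| + |r' - 1| := by
        rw [norm_smul, norm_smul, hσ, hσ']; simp [Real.norm_eq_abs]
  clear_value d D M m m'
  clear hd_def hD_def
  -- D ≥ M d / 4
  have hMd2 : (M * d) ^ 2 ≤ (4 * D) ^ 2 := by
    have h4 : d ^ 2 ≤ 4 := by nlinarith
    rcases le_total r r' with h | h
    · have hMe : M = r' := hM_def.trans (max_eq_right h)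
      rw [hMe]
      nlinarith [sq_nonneg (r' - r), sq_nonneg d, mul_pos hr hr',
        mul_nonneg (mul_nonneg (sub_nonneg.2 h) (sub_nonneg.2 h)) (sub_nonneg.2 h4),
        mul_nonneg (sub_nonneg.2 h) (sub_nonneg.2 h4)]
    · have hMe : M = r := hM_def.trans (max_eq_left h)
      rw [hMe]
      nlinarith [sq_nonneg (r - r'), sq_nonneg d, mul_pos hr hr',
        mul_nonneg (mul_nonneg (sub_nonneg.2 h) (sub_nonneg.2 h)) (sub_nonneg.2 h4),
        mul_nonneg (sub_nonneg.2 h) (sub_nonneg.2 h4)]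
  have hMd : M * d ≤ 4 * D :=
    le_of_pow_le_pow_left₀ two_ne_zero (by positivity : (0:ℝ) ≤ 4 * D) hMd2
  have hm0 : 0 ≤ m := hm_def ▸ le_min (abs_nonneg _) one_pos.le
  have hm'0 : 0 ≤ m' := hm'_def ▸ le_min (abs_nonneg _) one_pos.le
  have hrM : r ≤ M := hM_def ▸ le_max_left _ _
  have hr'M : r' ≤ M := hM_def ▸ le_max_right _ _
  have hr1M : |r - 1| ≤ M + 1 := by
    rw [abs_sub_le_iff]; constructor <;> linarith
  have hr'1M : |r' - 1| ≤ M + 1 := by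
    rw [abs_sub_le_iff]; constructor <;> linarith
  have claim : |D - d| ≤ 2 * (m + m') * (M + 1) := by
    by_cases hc : |r - 1| ≤ 1 ∧ |r' - 1| ≤ 1
    · have e1 : m = |r - 1| := hm_def.trans (min_eq_left hc.1)
      have e2 : m' = |r' - 1| := hm'_def.trans (min_eq_left hc.2)
      have hMm : 0 ≤ (m + m') * (2 * M + 1) :=
        mul_nonneg (by linarith) (by linarith)
      have hI : 2 * (m + m') * (M + 1) - (m + m') = (m + m') * (2 * M + 1) := by ring
      linarith [key, e1, e2]
    · have h1 : 1 ≤ m + m' := by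
        rcases not_and_or.1 hc with h | h
        · have : m = 1 := hm_def.trans (min_eq_right (le_of_not_ge h))
          linarith
        · have : m' = 1 := hm'_def.trans (min_eq_right (le_of_not_ge h))
          linarith
      have hp : 0 ≤ (m + m' - 1) * (M + 1) := mul_nonneg (by linarith) (by linarith)
      have hI : 2 * (m + m') * (M + 1) = 2 * (M + 1) + 2 * ((m + m' - 1) * (M + 1)) := by
        ring
      linarith [key, hr1M, hr'1M]
  -- final computation
  have e0 : 1 / d - 1 / D = (D - d) / (d * D) := by
    field_simp
  rw [e0, abs_div, abs_of_pos (by positivity : (0:ℝ) < d * D)]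
  have hden : M * d ^ 2 / 4 ≤ d * D := by
    have h1 : 0 ≤ d * (4 * D - M * d) := mul_nonneg hd.le (sub_nonneg.2 hMd)
    have hI : d * (4 * D - M * d) = 4 * (d * D) - 4 * (M * d ^ 2 / 4) := by ring
    linarith
  have hdenpos : 0 < M * d ^ 2 / 4 := by positivity
  have step : |D - d| / (d * D) ≤ (2 * (m + m') * (M + 1)) / (M * d ^ 2 / 4) :=
    div_le_div₀ (by positivity) claim hdenpos hden
  refine step.trans (le_of_eq ?_)
  field_simp
  ring
end
end

section
/- For every η ∈ (0, 1) there exists a constant C > 0 such that for all real numbers r, r' > 0 and all unit vectors σ, σ' ∈ ℝ³ with σ ≠ σ', | 1/‖σ − σ'‖ − 1/‖rσ − r'σ'‖ | ≤ C (min(|r − 1|, 1)^η + min(|r' − 1|, 1)^η) (1 + 1/max(r, r')) / ‖σ − σ'‖^{1+η}. -/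
noncomputable section

private lemma km_claim1 (r r' : ℝ) (hr : 0 < r) (hr' : 0 < r') :
    |r - r'| ≤ (min |r-1| 1 + min |r'-1| 1) * (max r r' + 1) := by
  set m := min |r-1| 1 with hm
  set m' := min |r'-1| 1 with hm'
  have hm0 : 0 ≤ m := le_min (abs_nonneg _) zero_le_one
  have hm'0 : 0 ≤ m' := le_min (abs_nonneg _) zero_le_one
  have hM : 0 < max r r' := lt_max_of_lt_left hr
  have hmax : |r - r'| ≤ max r r' := by
    rw [abs_sub_le_iff]
    exact ⟨by linarith [le_max_left r r'], by linarith [le_max_right r r']⟩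
  rcases le_or_gt r 2 with h2 | h2
  · rcases le_or_gt r' 2 with h2' | h2'
    · have e1 : m = |r-1| := min_eq_left (abs_le.2 ⟨by linarith, by linarith⟩)
      have e2 : m' = |r'-1| := min_eq_left (abs_le.2 ⟨by linarith, by linarith⟩)
      have h3 : |r - r'| ≤ |r-1| + |1-r'| := abs_sub_le r 1 r'
      rw [abs_sub_comm 1 r'] at h3
      nlinarith [mul_nonneg (add_nonneg hm0 hm'0) hM.le]
    · have e2 : m' = 1 := min_eq_right (by rw [abs_of_pos (by linarith)]; linarith)
      nlinarith [mul_nonneg (add_nonneg hm0 hm'0) hM.le, abs_nonneg (r - r')]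
  · have e1 : m = 1 := min_eq_right (by rw [abs_of_pos (by linarith)]; linarith)
    nlinarith [mul_nonneg (add_nonneg hm0 hm'0) hM.le, abs_nonneg (r - r')]

private lemma km_claimC1 (r r' : ℝ) (hr : 0 < r) (hr' : 0 < r') (h1 : 1 ≤ r * r') :
    r * r' - 1 ≤ 3 * (min |r-1| 1 + min |r'-1| 1) * (r * r') := by
  set m := min |r-1| 1 with hm
  set m' := min |r'-1| 1 with hm'
  have hm0 : 0 ≤ m := le_min (abs_nonneg _) zero_le_one
  have hm'0 : 0 ≤ m' := le_min (abs_nonneg _) zero_le_one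
  rcases le_or_gt r 2 with h2 | h2
  · rcases le_or_gt r' 2 with h2' | h2'
    · have e1 : m = |r-1| := min_eq_left (abs_le.2 ⟨by linarith, by linarith⟩)
      have e2 : m' = |r'-1| := min_eq_left (abs_le.2 ⟨by linarith, by linarith⟩)
      nlinarith [le_abs_self (r-1), le_abs_self (r'-1),
        mul_le_mul_of_nonneg_left (le_abs_self (r'-1)) hr.le,
        mul_nonneg (add_nonneg hm0 hm'0) (sub_nonneg.2 h1)]
    · have e2 : m' = 1 := min_eq_right (by rw [abs_of_pos (by linarith)]; linarith)
      nlinarith [mul_nonneg (add_nonneg hm0 hm'0) (mul_pos hr hr').le]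
  · have e1 : m = 1 := min_eq_right (by rw [abs_of_pos (by linarith)]; linarith)
    nlinarith [mul_nonneg (add_nonneg hm0 hm'0) (mul_pos hr hr').le]

private lemma km_claimC2 (r r' : ℝ) (hr : 0 < r) (hr' : 0 < r') (h1 : r * r' < 1) :
    1 - r * r' ≤ 2 * (min |r-1| 1 + min |r'-1| 1) := by
  set m := min |r-1| 1 with hm
  set m' := min |r'-1| 1 with hm'
  have hm0 : 0 ≤ m := le_min (abs_nonneg _) zero_le_one
  have hm'0 : 0 ≤ m' := le_min (abs_nonneg _) zero_le_one
  rcases le_or_gt r 2 with h2 | h2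
  · rcases le_or_gt r' 2 with h2' | h2'
    · have e1 : m = |r-1| := min_eq_left (abs_le.2 ⟨by linarith, by linarith⟩)
      have e2 : m' = |r'-1| := min_eq_left (abs_le.2 ⟨by linarith, by linarith⟩)
      nlinarith [neg_abs_le (r-1), mul_le_mul_of_nonneg_left (neg_abs_le (r'-1)) hr.le]
    · have e2 : m' = 1 := min_eq_right (by rw [abs_of_pos (by linarith)]; linarith)
      nlinarith [mul_pos hr hr']
  · have e1 : m = 1 := min_eq_right (by rw [abs_of_pos (by linarith)]; linarith)
    nlinarith [mul_pos hr hr']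

private lemma km_b_lower (r r' a b : ℝ) (hr : 0 < r) (hr' : 0 < r') (ha : 0 < a)
    (ha2 : a ≤ 2) (hb : 0 ≤ b) (hab : b^2 = (r-r')^2 + r*r'*a^2) :
    max r r' * a ≤ 4 * b := by
  have h4 : a^2 ≤ 4 := by nlinarith
  have key : (max r r' * a)^2 ≤ (4*b)^2 := by
    rcases le_total r r' with h | h
    · rw [max_eq_right h]
      nlinarith [sq_nonneg (r - r'), mul_nonneg (mul_nonneg hr.le hr'.le) (sq_nonneg a),
        mul_nonneg (sub_nonneg.2 h4) (mul_pos hr hr').le, sq_nonneg a,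
        mul_nonneg (sub_nonneg.2 h4) (sq_nonneg (r - r'))]
    · rw [max_eq_left h]
      nlinarith [sq_nonneg (r - r'), mul_nonneg (mul_nonneg hr.le hr'.le) (sq_nonneg a),
        mul_nonneg (sub_nonneg.2 h4) (mul_pos hr hr').le, sq_nonneg a,
        mul_nonneg (sub_nonneg.2 h4) (sq_nonneg (r - r'))]
  have hMa : 0 ≤ max r r' * a := mul_nonneg (le_trans hr.le (le_max_left _ _)) ha.le
  nlinarith [key, hMa]

private lemma km_bound1 (r r' a b : ℝ) (hr : 0 < r) (ha : 0 < a)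
    (hb : 0 < b) (hb4 : max r r' * a ≤ 4 * b) :
    |1/a - 1/b| ≤ 4 * (1 + 1/max r r') / a := by
  set M := max r r' with hM
  have hM0 : 0 < M := lt_max_of_lt_left hr
  have h1 : |1/a - 1/b| ≤ 1/a + 1/b := by
    rw [abs_le]
    exact ⟨by nlinarith [one_div_pos.2 ha, one_div_pos.2 hb],
      by nlinarith [one_div_pos.2 ha, one_div_pos.2 hb]⟩
  have h2 : 1/b ≤ 4/(M*a) := by
    rw [div_le_div_iff₀ hb (mul_pos hM0 ha)]
    linarith
  have h3 : 4 * (1 + 1/M) / a = 4/a + 4/(M*a) := by field_simp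
  have h4 : 1/a ≤ 4/a := by gcongr <;> norm_num
  rw [h3]; linarith

set_option maxHeartbeats 1000000 in
private lemma km_bound2 (r r' a b : ℝ) (hr : 0 < r) (hr' : 0 < r') (ha : 0 < a) (ha2 : a ≤ 2)
    (hb : 0 < b) (hab : b^2 = (r-r')^2 + r*r'*a^2) (hb4 : max r r' * a ≤ 4 * b) :
    |1/a - 1/b| ≤ 24 * (min |r-1| 1 + min |r'-1| 1) * (1 + 1/max r r') / a^2 := by
  have claim1 := km_claim1 r r' hr hr'
  have claimC1 := km_claimC1 r r' hr hr'
  have claimC2 := km_claimC2 r r' hr hr'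
  set M := max r r' with hM
  set T := min |r-1| 1 + min |r'-1| 1 with hT
  have hM0 : 0 < M := lt_max_of_lt_left hr
  have hT0 : 0 ≤ T := add_nonneg (le_min (abs_nonneg _) zero_le_one)
    (le_min (abs_nonneg _) zero_le_one)
  have hD : 0 < a * b * (a + b) := by positivity
  have hrb : |r - r'| ≤ b := by
    have h1 : (r - r')^2 ≤ b^2 := by nlinarith [mul_pos hr hr', sq_nonneg a]
    rw [abs_le]
    constructor <;> nlinarith
  have hbb : r * r' * a^2 ≤ b^2 := by nlinarith [sq_nonneg (r - r')]
  have e : 1/a - 1/b = (b^2 - a^2)/(a*b*(a+b)) := by field_simp; ring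
  have hnum : |b^2 - a^2| ≤ (r-r')^2 + |r*r'-1| * a^2 := by
    have e2 : b^2 - a^2 = (r-r')^2 + (r*r'-1)*a^2 := by rw [hab]; ring
    rw [e2]
    calc |(r-r')^2 + (r*r'-1)*a^2| ≤ |(r-r')^2| + |(r*r'-1)*a^2| := abs_add_le _ _
      _ = (r-r')^2 + |r*r'-1| * a^2 := by
          rw [abs_of_nonneg (sq_nonneg _), abs_mul, abs_of_nonneg (sq_nonneg a)]
  have step0 : |1/a - 1/b| ≤ ((r-r')^2 + |r*r'-1| * a^2)/(a*b*(a+b)) := by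
    rw [e, abs_div, abs_of_pos hD]
    gcongr
  have hT1 : (r-r')^2/(a*b*(a+b)) ≤ 4*T*(M+1)/(M*a^2) := by
    have n1 : (r-r')^2 ≤ (T*(M+1)) * b := by
      have h := mul_le_mul claim1 hrb (abs_nonneg _) (by positivity)
      calc (r-r')^2 = |r-r'| * |r-r'| := by rw [abs_mul_abs_self]; ring
        _ ≤ (T*(M+1)) * b := h
    calc (r-r')^2/(a*b*(a+b)) ≤ ((T*(M+1))*b)/(a*b*(a+b)) := by gcongr
      _ = (T*(M+1))/(a*(a+b)) := by field_simp
      _ ≤ (T*(M+1))/(a*b) := by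
          gcongr
          linarith
      _ ≤ 4*T*(M+1)/(M*a^2) := by
          rw [div_le_div_iff₀ (by positivity) (by positivity)]
          have h := mul_le_mul_of_nonneg_left hb4
            (mul_nonneg hT0 (by positivity : (0:ℝ) ≤ (M+1)*a))
          nlinarith [h]
  have hT2 : (|r*r'-1| * a^2)/(a*b*(a+b)) ≤ 16*T*(M+1)/(M*a^2) := by
    rcases le_or_gt 1 (r*r') with hc | hc
    · have habs : |r*r'-1| = r*r'-1 := abs_of_nonneg (by linarith)
      have n1 : |r*r'-1| * a^2 ≤ 3*T*b^2 := by
        rw [habs]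
        calc (r*r'-1) * a^2 ≤ (3*T*(r*r')) * a^2 :=
              mul_le_mul_of_nonneg_right (claimC1 hc) (sq_nonneg a)
          _ = 3*T*(r*r'*a^2) := by ring
          _ ≤ 3*T*b^2 := mul_le_mul_of_nonneg_left hbb (by positivity)
      calc (|r*r'-1| * a^2)/(a*b*(a+b)) ≤ (3*T*b^2)/(a*b*(a+b)) := by gcongr
        _ ≤ (3*T*b^2)/(a*b*b) := by
            gcongr
            linarith
        _ = 3*T/a := by field_simp
        _ ≤ 16*T*(M+1)/(M*a^2) := by
            rw [div_le_div_iff₀ ha (by positivity)]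
            nlinarith [mul_nonneg (mul_nonneg hT0 hM0.le) ha.le,
              mul_nonneg (mul_nonneg hT0 hM0.le) (mul_nonneg ha.le ha.le),
              mul_nonneg hT0 (mul_nonneg ha.le ha.le)]
    · have habs : |r*r'-1| = 1 - r*r' := by rw [abs_of_nonpos (by linarith)]; ring
      have n1 : |r*r'-1| * a^2 ≤ 2*T*a^2 := by
        rw [habs]
        exact mul_le_mul_of_nonneg_right (claimC2 hc) (sq_nonneg a)
      calc (|r*r'-1| * a^2)/(a*b*(a+b)) ≤ (2*T*a^2)/(a*b*(a+b)) := by gcongr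
        _ ≤ (2*T*a^2)/(a*b*a) := by
            gcongr
            linarith
        _ = 2*T/b := by field_simp
        _ ≤ 16*T*(M+1)/(M*a^2) := by
            rw [div_le_div_iff₀ hb (by positivity)]
            have h := mul_le_mul_of_nonneg_left hb4
              (mul_nonneg (mul_nonneg (by norm_num : (0:ℝ) ≤ 2) hT0) ha.le)
            nlinarith [h, mul_nonneg (mul_nonneg (sub_nonneg.2 ha2) hT0) hb.le,
              mul_nonneg (mul_nonneg hT0 hM0.le) hb.le]
  have heq : 24 * T * (1 + 1/M) / a^2 = 24*T*(M+1)/(M*a^2) := by field_simp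
  rw [heq]
  refine step0.trans ?_
  rw [add_div]
  have hfin : 4*T*(M+1)/(M*a^2) + 16*T*(M+1)/(M*a^2) ≤ 24*T*(M+1)/(M*a^2) := by
    rw [← add_div, div_le_div_iff₀ (by positivity) (by positivity)]
    nlinarith [mul_nonneg (mul_nonneg hT0 (by positivity : (0:ℝ) ≤ M+1))
      (by positivity : (0:ℝ) ≤ M*a^2)]
  exact (add_le_add hT1 hT2).trans hfin

private lemma km_interp (X A s η : ℝ) (hA : 0 ≤ A) (hs : 0 ≤ s)
    (hη0 : 0 < η) (hη1 : η ≤ 1) (h1 : X ≤ A) (h2 : X ≤ A * s) : X ≤ A * s ^ η := by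
  rcases le_or_gt 1 s with h | h
  · have hs1 : (1:ℝ) ≤ s ^ η := Real.one_le_rpow h hη0.le
    calc X ≤ A := h1
      _ = A * 1 := (mul_one A).symm
      _ ≤ A * s ^ η := mul_le_mul_of_nonneg_left hs1 hA
  · have hss : s ≤ s ^ η := by
      rcases eq_or_lt_of_le hs with h0 | h0
      · rw [← h0, Real.zero_rpow hη0.ne']
      · calc s = s ^ (1:ℝ) := (Real.rpow_one s).symm
          _ ≤ s ^ η := Real.rpow_le_rpow_of_exponent_ge h0 h.le hη1
    exact h2.trans (mul_le_mul_of_nonneg_left hss hA)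

private lemma km_rpow_subadd (x y p : ℝ) (hx : 0 ≤ x) (hy : 0 ≤ y)
    (hp : 0 ≤ p) (hp1 : p ≤ 1) : (x + y) ^ p ≤ x ^ p + y ^ p := by
  have h := NNReal.rpow_add_le_add_rpow (x.toNNReal) (y.toNNReal) hp hp1
  rw [← Real.toNNReal_add hx hy] at h
  have h2 := NNReal.coe_le_coe.2 h
  push_cast at h2
  rwa [Real.coe_toNNReal _ (add_nonneg hx hy), Real.coe_toNNReal _ hx,
    Real.coe_toNNReal _ hy] at h2

private lemma km_core (η r r' a b : ℝ) (hη0 : 0 < η) (hη1 : η < 1)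
    (hr : 0 < r) (hr' : 0 < r') (ha : 0 < a) (ha2 : a ≤ 2) (hb0 : 0 ≤ b)
    (hab : b^2 = (r-r')^2 + r*r'*a^2) :
    |1/a - 1/b| ≤
      24 * ((min |r-1| 1) ^ η + (min |r'-1| 1) ^ η) * (1 + 1/max r r') / a^(1+η) := by
  have hb : 0 < b := by
    rcases hb0.eq_or_lt with h0 | h0
    · exfalso
      have : (0:ℝ) < b^2 := by
        rw [hab]
        have := mul_pos (mul_pos hr hr') (pow_pos ha 2)
        nlinarith [sq_nonneg (r-r')]
      rw [← h0] at this
      simp at this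
    · exact h0
  have hb4 := km_b_lower r r' a b hr hr' ha ha2 hb0 hab
  set M := max r r' with hM
  set m := min |r-1| 1 with hm
  set m' := min |r'-1| 1 with hm'
  set T := m + m' with hT
  have hM0 : 0 < M := lt_max_of_lt_left hr
  have hm0 : 0 ≤ m := le_min (abs_nonneg _) zero_le_one
  have hm'0 : 0 ≤ m' := le_min (abs_nonneg _) zero_le_one
  have hT0 : 0 ≤ T := add_nonneg hm0 hm'0
  have hP0 : 0 < 1 + 1/M := by positivity
  set A := 4 * (1 + 1/M) / a with hA
  have hA0 : 0 < A := by positivity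
  have h1 : |1/a - 1/b| ≤ A := km_bound1 r r' a b hr ha hb hb4
  have h2 : |1/a - 1/b| ≤ A * (6*T/a) := by
    have e : A * (6*T/a) = 24 * T * (1 + 1/M) / a^2 := by
      rw [hA]; field_simp; ring
    rw [e]
    exact km_bound2 r r' a b hr hr' ha ha2 hb hab hb4
  have h3 : |1/a - 1/b| ≤ A * (6*T/a) ^ η :=
    km_interp _ _ _ _ hA0.le (by positivity) hη0 hη1.le h1 h2
  have e6 : (6*T/a) ^ η = (6:ℝ)^η * T^η / a^η := by
    rw [Real.div_rpow (by positivity) ha.le, Real.mul_rpow (by norm_num) hT0]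
  have h6 : (6:ℝ) ^ η ≤ 6 := by
    calc (6:ℝ) ^ η ≤ (6:ℝ) ^ (1:ℝ) :=
          Real.rpow_le_rpow_of_exponent_le (by norm_num) hη1.le
      _ = 6 := Real.rpow_one 6
  have hTη : T ^ η ≤ m ^ η + m' ^ η := km_rpow_subadd m m' η hm0 hm'0 hη0.le hη1.le
  have haη : 0 < a ^ η := Real.rpow_pos_of_pos ha η
  have hTη0 : 0 ≤ T ^ η := Real.rpow_nonneg hT0 η
  calc |1/a - 1/b| ≤ A * (6*T/a) ^ η := h3
    _ = 4 * (1 + 1/M) * ((6:ℝ)^η * T^η) / (a * a^η) := by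
        rw [e6, hA]; ring
    _ ≤ 4 * (1 + 1/M) * (6 * (m^η + m'^η)) / (a * a^η) := by
        gcongr
    _ = 24 * (m^η + m'^η) * (1 + 1/M) / (a * a^η) := by ring
    _ = 24 * (m^η + m'^η) * (1 + 1/M) / a^(1+η) := by
        rw [Real.rpow_add ha, Real.rpow_one]

/-- Interpolated bound on the difference between the Coulomb
kernel on the sphere and the Coulomb kernel in `ℝ³`: for every `η ∈ (0,1)`,
`|1/‖σ−σ'‖ − 1/‖rσ−r'σ'‖| ≤
  C (min(|r−1|,1)^η + min(|r'−1|,1)^η)(1 + 1/max(r,r'))/‖σ−σ'‖^{1+η}`. -/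
theorem kernel_difference_bound_interpolated (η : ℝ) (hη0 : 0 < η) (hη1 : η < 1) :
    ∃ C : ℝ, 0 < C ∧ ∀ r r' : ℝ, 0 < r → 0 < r' →
      ∀ σ σ' : E3, ‖σ‖ = 1 → ‖σ'‖ = 1 → σ ≠ σ' →
        |1 / ‖σ - σ'‖ - 1 / ‖r • σ - r' • σ'‖| ≤
          C * ((min |r - 1| 1) ^ η + (min |r' - 1| 1) ^ η) * (1 + 1 / max r r') /
            ‖σ - σ'‖ ^ (1 + η) := by
  refine ⟨24, by norm_num, ?_⟩
  intro r r' hr hr' σ σ' hσ hσ' hne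
  have ha : 0 < ‖σ - σ'‖ := by
    rw [norm_pos_iff, sub_ne_zero]
    exact hne
  have ha2 : ‖σ - σ'‖ ≤ 2 := by
    calc ‖σ - σ'‖ ≤ ‖σ‖ + ‖σ'‖ := norm_sub_le σ σ'
      _ = 2 := by rw [hσ, hσ']; norm_num
  have h1 : ‖r • σ - r' • σ'‖^2 = r^2 - 2*(r*r')*(inner ℝ σ σ' : ℝ) + r'^2 := by
    rw [norm_sub_sq_real, real_inner_smul_left, real_inner_smul_right,
      norm_smul, norm_smul, hσ, hσ']
    simp only [Real.norm_eq_abs, abs_of_pos hr, abs_of_pos hr', mul_one]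
    ring
  have h2 : ‖σ - σ'‖^2 = 2 - 2*(inner ℝ σ σ' : ℝ) := by
    rw [norm_sub_sq_real, hσ, hσ']
    ring
  have hab : ‖r • σ - r' • σ'‖^2 = (r-r')^2 + r*r'*‖σ - σ'‖^2 := by
    rw [h1, h2]; ring
  exact km_core η r r' ‖σ - σ'‖ ‖r • σ - r' • σ'‖ hη0 hη1 hr hr' ha ha2
    (norm_nonneg _) hab
end
end

section
/- Let C₁ > 0. There exists a constant c₁ > 0, depending only on C₁, with the following property: for every continuously differentiable function W : ℝ → ℝ satisfying W(x) ≥ 1 and |W'(x)| ≤ C₁ W(x) for all x ≥ 0, and for every twice continuously differentiable function u : ℝ → ℂ with compact support satisfying u(0) = 0, one has ( ∫₀^∞ |u''(x)|² dx )^{1/2} + ( ∫₀^∞ W(x)² |u(x)|² dx )^{1/2} + ( ∫₀^∞ W(x) |u'(x)|² dx )^{1/2} ≤ c₁^{−1} ( ∫₀^∞ |−u''(x) + W(x)u(x)|² dx )^{1/2}. -/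
open MeasureTheory

noncomputable section

set_option maxHeartbeats 1000000 in
/-- Graph-norm estimate for the half-line Schrödinger
operator `u ↦ −u'' + W u` with Dirichlet condition at `0`, with a constant
depending only on the constant `C₁` in the bound `|W'| ≤ C₁ W`. -/
theorem halfline_schrodinger_graph_estimate (C₁ : ℝ) (hC₁ : 0 < C₁) :
    ∃ c₁ : ℝ, 0 < c₁ ∧ ∀ W : ℝ → ℝ, ContDiff ℝ 1 W →
      (∀ x : ℝ, 0 ≤ x → 1 ≤ W x) →
      (∀ x : ℝ, 0 ≤ x → |deriv W x| ≤ C₁ * W x) →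
      ∀ u : ℝ → ℂ, ContDiff ℝ 2 u → HasCompactSupport u → u 0 = 0 →
        Real.sqrt (∫ x in Set.Ioi (0 : ℝ), ‖deriv (deriv u) x‖ ^ 2) +
            Real.sqrt (∫ x in Set.Ioi (0 : ℝ), W x ^ 2 * ‖u x‖ ^ 2) +
            Real.sqrt (∫ x in Set.Ioi (0 : ℝ), W x * ‖deriv u x‖ ^ 2) ≤
          c₁⁻¹ * Real.sqrt
            (∫ x in Set.Ioi (0 : ℝ), ‖-deriv (deriv u) x + (W x : ℂ) * u x‖ ^ 2) := by
  have hM0 : 0 < Real.sqrt (4 + 2 * C₁ ^ 2) := Real.sqrt_pos.mpr (by positivity)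
  set M := Real.sqrt (4 + 2 * C₁ ^ 2) with hMdef
  have hMsq : M ^ 2 = 4 + 2 * C₁ ^ 2 := Real.sq_sqrt (by positivity)
  refine ⟨(3 * M)⁻¹, by positivity, ?_⟩
  intro W hW hW1 hW' u hu hsupp hu0
  rw [inv_inv]
  -- regularity facts
  have hu1 : ContDiff ℝ 1 (deriv u) := by
    have h : ContDiff ℝ (1 + 1 : ℕ) u := by exact_mod_cast hu
    exact (contDiff_succ_iff_deriv.mp h).2.2
  have hcu : Continuous u := hu.continuous
  have hcv : Continuous (deriv u) := hu1.continuous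
  have hcv' : Continuous (deriv (deriv u)) := hu1.continuous_deriv le_rfl
  have hcW : Continuous W := hW.continuous
  have hcW' : Continuous (deriv W) := hW.continuous_deriv le_rfl
  have hdu : ∀ x : ℝ, HasDerivAt u (deriv u x) x :=
    fun x => (hu.differentiable two_ne_zero x).hasDerivAt
  have hdv : ∀ x : ℝ, HasDerivAt (deriv u) (deriv (deriv u) x) x :=
    fun x => (hu1.differentiable one_ne_zero x).hasDerivAt
  have hdW : ∀ x : ℝ, HasDerivAt W (deriv W x) x :=
    fun x => (hW.differentiable one_ne_zero x).hasDerivAt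
  -- typed continuity lemmas (lambda form)
  have cub : Continuous fun x : ℝ => (starRingEnd ℂ) (u x) := Complex.continuous_conj.comp hcu
  have cvb : Continuous fun x : ℝ => (starRingEnd ℂ) (deriv u x) :=
    Complex.continuous_conj.comp hcv
  have cWc : Continuous fun x : ℝ => ((W x : ℝ) : ℂ) := Complex.continuous_ofReal.comp hcW
  have cW'c : Continuous fun x : ℝ => ((deriv W x : ℝ) : ℂ) :=
    Complex.continuous_ofReal.comp hcW'
  have cW2c : Continuous fun x : ℝ => ((W x ^ 2 : ℝ) : ℂ) :=
    Complex.continuous_ofReal.comp (hcW.fun_pow 2)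
  -- support radius
  obtain ⟨R₁, hR₁, hz₁⟩ := hsupp.exists_pos_le_norm
  obtain ⟨R₂, hR₂, hz₂⟩ := hsupp.deriv.exists_pos_le_norm
  obtain ⟨R₃, hR₃, hz₃⟩ := hsupp.deriv.deriv.exists_pos_le_norm
  set R := max R₁ (max R₂ R₃) with hRdef
  have hR0 : 0 < R := lt_of_lt_of_le hR₁ (le_max_left _ _)
  have hxnorm : ∀ x : ℝ, R ≤ x → R ≤ ‖x‖ := fun x hx => le_trans hx (le_abs_self x)
  have huR : ∀ x : ℝ, R ≤ x → u x = 0 :=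
    fun x hx => hz₁ x (le_trans (le_max_left _ _) (hxnorm x hx))
  have hvR : ∀ x : ℝ, R ≤ x → deriv u x = 0 :=
    fun x hx => hz₂ x (le_trans (le_trans (le_max_left _ _) (le_max_right _ _)) (hxnorm x hx))
  have hv'R : ∀ x : ℝ, R ≤ x → deriv (deriv u) x = 0 :=
    fun x hx => hz₃ x (le_trans (le_trans (le_max_right _ _) (le_max_right _ _)) (hxnorm x hx))
  -- the function f
  set f : ℝ → ℂ := fun x => -deriv (deriv u) x + (W x : ℂ) * u x with hfdef
  have hcf : Continuous f := hcv'.fun_neg.add (cWc.fun_mul hcu)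
  have hfR : ∀ x : ℝ, R ≤ x → f x = 0 := by
    intro x hx; simp [hfdef, huR x hx, hv'R x hx]
  have hcsf : HasCompactSupport f :=
    HasCompactSupport.comp₂_left (m := fun (z w : ℂ) => -z + w)
      hsupp.deriv.deriv (HasCompactSupport.mul_left hsupp) (by simp)
  -- real quantities
  set P := ∫ x in (0:ℝ)..R, ‖deriv u x‖ ^ 2 with hPdef
  set Q := ∫ x in (0:ℝ)..R, W x * ‖u x‖ ^ 2 with hQdef
  set A2 := ∫ x in (0:ℝ)..R, W x * ‖deriv u x‖ ^ 2 with hA2def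
  set B2 := ∫ x in (0:ℝ)..R, W x ^ 2 * ‖u x‖ ^ 2 with hB2def
  set T := ∫ x in (0:ℝ)..R, ‖deriv (deriv u) x‖ ^ 2 with hTdef
  set F2 := ∫ x in (0:ℝ)..R, ‖f x‖ ^ 2 with hF2def
  have hWpos : ∀ x : ℝ, x ∈ Set.Icc (0:ℝ) R → 0 ≤ W x :=
    fun x hx => le_trans zero_le_one (hW1 x hx.1)
  have hP0 : 0 ≤ P := intervalIntegral.integral_nonneg hR0.le (fun x _ => by positivity)
  have hA20 : 0 ≤ A2 := intervalIntegral.integral_nonneg hR0.le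
    (fun x hx => mul_nonneg (hWpos x hx) (sq_nonneg _))
  have hB20 : 0 ≤ B2 := intervalIntegral.integral_nonneg hR0.le
    (fun x _ => mul_nonneg (sq_nonneg _) (sq_nonneg _))
  have hF20 : 0 ≤ F2 := intervalIntegral.integral_nonneg hR0.le (fun x _ => by positivity)
  -- real part of interval integrals
  have reInt : ∀ g : ℝ → ℂ, Continuous g →
      (∫ x in (0:ℝ)..R, g x).re = ∫ x in (0:ℝ)..R, (g x).re := by
    intro g hg
    rw [intervalIntegral.integral_of_le hR0.le, intervalIntegral.integral_of_le hR0.le]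
    have := integral_re (μ := volume.restrict (Set.Ioc 0 R)) (f := g) hg.integrableOn_Ioc
    simpa [RCLike.re_to_complex] using this.symm
  have hre1 : ∀ z : ℂ, (z * (starRingEnd ℂ) z).re = ‖z‖ ^ 2 := fun z => by
    rw [Complex.mul_conj, Complex.ofReal_re, ← Complex.sq_norm]
  have hre2 : ∀ (w : ℝ) (z : ℂ), ((w : ℂ) * (z * (starRingEnd ℂ) z)).re = w * ‖z‖ ^ 2 :=
    fun w z => by rw [Complex.re_ofReal_mul, hre1]
  -- first integration by parts
  have E1 : (∫ x in (0:ℝ)..R, deriv (deriv u) x * (starRingEnd ℂ) (u x))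
      = -∫ x in (0:ℝ)..R, deriv u x * (starRingEnd ℂ) (deriv u x) := by
    have key := intervalIntegral.integral_mul_deriv_eq_deriv_mul (a := 0) (b := R)
      (u := deriv u) (u' := deriv (deriv u))
      (v := fun y => (starRingEnd ℂ) (u y)) (v' := fun x => (starRingEnd ℂ) (deriv u x))
      (fun x _ => hdv x) (fun x _ => (hdu x).star)
      (hcv'.intervalIntegrable _ _) (cvb.intervalIntegrable _ _)
    simp only [hvR R le_rfl, hu0, zero_mul, map_zero, mul_zero, sub_zero, zero_sub] at key
    rw [key, neg_neg]
  -- second integration by parts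
  have E2 : (∫ x in (0:ℝ)..R, deriv (deriv u) x * ((W x : ℂ) * (starRingEnd ℂ) (u x)))
      = -∫ x in (0:ℝ)..R, deriv u x *
          (((deriv W x : ℝ) : ℂ) * (starRingEnd ℂ) (u x)
            + (W x : ℂ) * (starRingEnd ℂ) (deriv u x)) := by
    have hdg : ∀ x : ℝ, HasDerivAt (fun y => (W y : ℂ) * (starRingEnd ℂ) (u y))
        (((deriv W x : ℝ) : ℂ) * (starRingEnd ℂ) (u x)
          + (W x : ℂ) * (starRingEnd ℂ) (deriv u x)) x :=
      fun x => ((hdW x).ofReal_comp).mul ((hdu x).star)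
    have key := intervalIntegral.integral_mul_deriv_eq_deriv_mul (a := 0) (b := R)
      (u := deriv u) (u' := deriv (deriv u))
      (v := fun y => (W y : ℂ) * (starRingEnd ℂ) (u y))
      (v' := fun x => ((deriv W x : ℝ) : ℂ) * (starRingEnd ℂ) (u x)
        + (W x : ℂ) * (starRingEnd ℂ) (deriv u x))
      (fun x _ => hdv x) (fun x _ => hdg x)
      (hcv'.intervalIntegrable _ _)
      (((cW'c.fun_mul cub).fun_add (cWc.fun_mul cvb)).intervalIntegrable _ _)
    simp only [hvR R le_rfl, hu0, zero_mul, map_zero, mul_zero, sub_zero, zero_sub] at key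
    rw [key, neg_neg]
  -- identity 1 : P + Q = re ∫ f ū
  have I1 : (∫ x in (0:ℝ)..R, f x * (starRingEnd ℂ) (u x))
      = (∫ x in (0:ℝ)..R, deriv u x * (starRingEnd ℂ) (deriv u x))
        + ∫ x in (0:ℝ)..R, (W x : ℂ) * (u x * (starRingEnd ℂ) (u x)) := by
    have hpt : Set.EqOn (fun x => f x * (starRingEnd ℂ) (u x))
        (fun x => -(deriv (deriv u) x * (starRingEnd ℂ) (u x))
          + (W x : ℂ) * (u x * (starRingEnd ℂ) (u x))) (Set.uIcc 0 R) := by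
      intro x _; simp only [hfdef]; ring
    rw [intervalIntegral.integral_congr hpt,
      intervalIntegral.integral_add
        ((hcv'.fun_mul cub).fun_neg.intervalIntegrable _ _)
        ((cWc.fun_mul (hcu.fun_mul cub)).intervalIntegrable _ _),
      intervalIntegral.integral_neg, E1, neg_neg]
  have hPQ : P + Q = (∫ x in (0:ℝ)..R, f x * (starRingEnd ℂ) (u x)).re := by
    rw [I1, Complex.add_re, reInt _ (hcv.fun_mul cvb),
      reInt _ (cWc.fun_mul (hcu.fun_mul cub)),
      intervalIntegral.integral_congr (g := fun x => ‖deriv u x‖ ^ 2)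
        (fun x _ => hre1 (deriv u x)),
      intervalIntegral.integral_congr (g := fun x => W x * ‖u x‖ ^ 2)
        (fun x _ => hre2 (W x) (u x))]
  -- estimate 1
  have est1 : (∫ x in (0:ℝ)..R, f x * (starRingEnd ℂ) (u x)).re
      ≤ 1/2 * F2 + 1/2 * Q := by
    have cre : Continuous fun x : ℝ => (f x * (starRingEnd ℂ) (u x)).re :=
      Complex.continuous_re.comp (hcf.fun_mul cub)
    rw [reInt _ (hcf.fun_mul cub)]
    have hmono : (∫ x in (0:ℝ)..R, (f x * (starRingEnd ℂ) (u x)).re)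
        ≤ ∫ x in (0:ℝ)..R, (1/2 * ‖f x‖ ^ 2 + 1/2 * (W x * ‖u x‖ ^ 2)) := by
      apply intervalIntegral.integral_mono_on hR0.le (cre.intervalIntegrable _ _)
        (((continuous_const.fun_mul (hcf.norm.fun_pow 2)).fun_add
          (continuous_const.fun_mul (hcW.fun_mul (hcu.norm.fun_pow 2)))).intervalIntegrable _ _)
      intro x hx
      have h1 : (f x * (starRingEnd ℂ) (u x)).re ≤ ‖f x‖ * ‖u x‖ := by
        calc (f x * (starRingEnd ℂ) (u x)).re
            ≤ ‖f x * (starRingEnd ℂ) (u x)‖ := Complex.re_le_norm _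
          _ = ‖f x‖ * ‖u x‖ := by
              rw [norm_mul, RCLike.norm_conj]
      have h2 : 1 ≤ W x := hW1 x hx.1
      nlinarith [sq_nonneg (‖f x‖ - ‖u x‖), sq_nonneg (‖u x‖),
        mul_nonneg (sub_nonneg.mpr h2) (sq_nonneg (‖u x‖))]
    calc (∫ x in (0:ℝ)..R, (f x * (starRingEnd ℂ) (u x)).re)
        ≤ ∫ x in (0:ℝ)..R, (1/2 * ‖f x‖ ^ 2 + 1/2 * (W x * ‖u x‖ ^ 2)) := hmono
      _ = 1/2 * F2 + 1/2 * Q := by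
          rw [intervalIntegral.integral_add
            ((continuous_const.fun_mul (hcf.norm.fun_pow 2)).intervalIntegrable _ _)
            ((continuous_const.fun_mul (hcW.fun_mul (hcu.norm.fun_pow 2))).intervalIntegrable _ _),
            intervalIntegral.integral_const_mul, intervalIntegral.integral_const_mul,
            hF2def, hQdef]
  have hQF : Q ≤ F2 := by linarith [hPQ, est1, hP0]
  -- identity 2
  have I2 : (∫ x in (0:ℝ)..R, f x * ((W x : ℂ) * (starRingEnd ℂ) (u x)))
      = (∫ x in (0:ℝ)..R, ((deriv W x : ℝ) : ℂ) * (deriv u x * (starRingEnd ℂ) (u x)))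
        + ((∫ x in (0:ℝ)..R, (W x : ℂ) * (deriv u x * (starRingEnd ℂ) (deriv u x)))
          + ∫ x in (0:ℝ)..R, ((W x ^ 2 : ℝ) : ℂ) * (u x * (starRingEnd ℂ) (u x))) := by
    have hpt : Set.EqOn (fun x => f x * ((W x : ℂ) * (starRingEnd ℂ) (u x)))
        (fun x => -(deriv (deriv u) x * ((W x : ℂ) * (starRingEnd ℂ) (u x)))
          + ((W x ^ 2 : ℝ) : ℂ) * (u x * (starRingEnd ℂ) (u x))) (Set.uIcc 0 R) := by
      intro x _; simp only [hfdef]; push_cast; ring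
    have hpt2 : Set.EqOn (fun x => deriv u x *
        (((deriv W x : ℝ) : ℂ) * (starRingEnd ℂ) (u x)
          + (W x : ℂ) * (starRingEnd ℂ) (deriv u x)))
        (fun x => ((deriv W x : ℝ) : ℂ) * (deriv u x * (starRingEnd ℂ) (u x))
          + (W x : ℂ) * (deriv u x * (starRingEnd ℂ) (deriv u x))) (Set.uIcc 0 R) := by
      intro x _; ring
    rw [intervalIntegral.integral_congr hpt,
      intervalIntegral.integral_add
        ((hcv'.fun_mul (cWc.fun_mul cub)).fun_neg.intervalIntegrable _ _)
        ((cW2c.fun_mul (hcu.fun_mul cub)).intervalIntegrable _ _),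
      intervalIntegral.integral_neg, E2, neg_neg,
      intervalIntegral.integral_congr hpt2,
      intervalIntegral.integral_add
        ((cW'c.fun_mul (hcv.fun_mul cub)).intervalIntegrable _ _)
        ((cWc.fun_mul (hcv.fun_mul cvb)).intervalIntegrable _ _),
      add_assoc]
  have hAB : A2 + B2 = (∫ x in (0:ℝ)..R, f x * ((W x : ℂ) * (starRingEnd ℂ) (u x))).re
      - ∫ x in (0:ℝ)..R, deriv W x * (deriv u x * (starRingEnd ℂ) (u x)).re := by
    rw [I2, Complex.add_re, Complex.add_re,
      reInt _ (cW'c.fun_mul (hcv.fun_mul cub)),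
      reInt _ (cWc.fun_mul (hcv.fun_mul cvb)),
      reInt _ (cW2c.fun_mul (hcu.fun_mul cub)),
      intervalIntegral.integral_congr
        (g := fun x => deriv W x * (deriv u x * (starRingEnd ℂ) (u x)).re)
        (fun x _ => Complex.re_ofReal_mul _ _),
      intervalIntegral.integral_congr (g := fun x => W x * ‖deriv u x‖ ^ 2)
        (fun x _ => hre2 (W x) (deriv u x)),
      intervalIntegral.integral_congr (g := fun x => W x ^ 2 * ‖u x‖ ^ 2)
        (fun x _ => hre2 (W x ^ 2) (u x)), hA2def, hB2def]
    ring
  -- estimate 2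
  have est2 : (∫ x in (0:ℝ)..R, f x * ((W x : ℂ) * (starRingEnd ℂ) (u x))).re
      ≤ 1/2 * F2 + 1/2 * B2 := by
    have cre : Continuous fun x : ℝ => (f x * ((W x : ℂ) * (starRingEnd ℂ) (u x))).re :=
      Complex.continuous_re.comp (hcf.fun_mul (cWc.fun_mul cub))
    rw [reInt _ (hcf.fun_mul (cWc.fun_mul cub))]
    have hmono : (∫ x in (0:ℝ)..R, (f x * ((W x : ℂ) * (starRingEnd ℂ) (u x))).re)
        ≤ ∫ x in (0:ℝ)..R, (1/2 * ‖f x‖ ^ 2 + 1/2 * (W x ^ 2 * ‖u x‖ ^ 2)) := by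
      apply intervalIntegral.integral_mono_on hR0.le (cre.intervalIntegrable _ _)
        (((continuous_const.fun_mul (hcf.norm.fun_pow 2)).fun_add
          (continuous_const.fun_mul ((hcW.fun_pow 2).fun_mul (hcu.norm.fun_pow 2)))).intervalIntegrable _ _)
      intro x hx
      have h2 : 1 ≤ W x := hW1 x hx.1
      have h1 : (f x * ((W x : ℂ) * (starRingEnd ℂ) (u x))).re
          ≤ ‖f x‖ * (W x * ‖u x‖) := by
        calc (f x * ((W x : ℂ) * (starRingEnd ℂ) (u x))).re
            ≤ ‖f x * ((W x : ℂ) * (starRingEnd ℂ) (u x))‖ := Complex.re_le_norm _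
          _ = ‖f x‖ * (W x * ‖u x‖) := by
              rw [norm_mul, norm_mul, RCLike.norm_conj,
                Complex.norm_real, Real.norm_eq_abs, abs_of_nonneg (by linarith)]
      nlinarith [sq_nonneg (‖f x‖ - W x * ‖u x‖)]
    calc (∫ x in (0:ℝ)..R, (f x * ((W x : ℂ) * (starRingEnd ℂ) (u x))).re)
        ≤ ∫ x in (0:ℝ)..R, (1/2 * ‖f x‖ ^ 2 + 1/2 * (W x ^ 2 * ‖u x‖ ^ 2)) := hmono
      _ = 1/2 * F2 + 1/2 * B2 := by
          rw [intervalIntegral.integral_add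
            ((continuous_const.fun_mul (hcf.norm.fun_pow 2)).intervalIntegrable _ _)
            ((continuous_const.fun_mul ((hcW.fun_pow 2).fun_mul (hcu.norm.fun_pow 2))).intervalIntegrable _ _),
            intervalIntegral.integral_const_mul, intervalIntegral.integral_const_mul,
            hF2def, hB2def]
  -- estimate 3
  have est3 : -(∫ x in (0:ℝ)..R, deriv W x * (deriv u x * (starRingEnd ℂ) (u x)).re)
      ≤ 1/2 * A2 + C₁ ^ 2 / 2 * Q := by
    rw [← intervalIntegral.integral_neg]
    have cre : Continuous fun x : ℝ => (deriv u x * (starRingEnd ℂ) (u x)).re :=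
      Complex.continuous_re.comp (hcv.fun_mul cub)
    have hmono : (∫ x in (0:ℝ)..R, -(deriv W x * (deriv u x * (starRingEnd ℂ) (u x)).re))
        ≤ ∫ x in (0:ℝ)..R, (1/2 * (W x * ‖deriv u x‖ ^ 2)
            + C₁ ^ 2 / 2 * (W x * ‖u x‖ ^ 2)) := by
      apply intervalIntegral.integral_mono_on hR0.le
        ((hcW'.fun_mul cre).fun_neg.intervalIntegrable _ _)
        (((continuous_const.fun_mul (hcW.fun_mul (hcv.norm.fun_pow 2))).fun_add
          (continuous_const.fun_mul (hcW.fun_mul (hcu.norm.fun_pow 2)))).intervalIntegrable _ _)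
      intro x hx
      have h2 : 1 ≤ W x := hW1 x hx.1
      have hW0 : 0 ≤ W x := by linarith
      have hr : |(deriv u x * (starRingEnd ℂ) (u x)).re| ≤ ‖deriv u x‖ * ‖u x‖ := by
        calc |(deriv u x * (starRingEnd ℂ) (u x)).re|
            ≤ ‖deriv u x * (starRingEnd ℂ) (u x)‖ := Complex.abs_re_le_norm _
          _ = ‖deriv u x‖ * ‖u x‖ := by
              rw [norm_mul, RCLike.norm_conj]
      have hstep : -(deriv W x * (deriv u x * (starRingEnd ℂ) (u x)).re)
          ≤ (C₁ * W x) * (‖deriv u x‖ * ‖u x‖) := by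
        calc -(deriv W x * (deriv u x * (starRingEnd ℂ) (u x)).re)
            ≤ |deriv W x * (deriv u x * (starRingEnd ℂ) (u x)).re| := neg_le_abs _
          _ = |deriv W x| * |(deriv u x * (starRingEnd ℂ) (u x)).re| := abs_mul _ _
          _ ≤ (C₁ * W x) * (‖deriv u x‖ * ‖u x‖) :=
              mul_le_mul (hW' x hx.1) hr (abs_nonneg _) (by positivity)
      nlinarith [mul_nonneg hW0 (sq_nonneg (‖deriv u x‖ - C₁ * ‖u x‖))]
    calc (∫ x in (0:ℝ)..R, -(deriv W x * (deriv u x * (starRingEnd ℂ) (u x)).re))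
        ≤ ∫ x in (0:ℝ)..R, (1/2 * (W x * ‖deriv u x‖ ^ 2)
            + C₁ ^ 2 / 2 * (W x * ‖u x‖ ^ 2)) := hmono
      _ = 1/2 * A2 + C₁ ^ 2 / 2 * Q := by
          rw [intervalIntegral.integral_add
            ((continuous_const.fun_mul (hcW.fun_mul (hcv.norm.fun_pow 2))).intervalIntegrable _ _)
            ((continuous_const.fun_mul (hcW.fun_mul (hcu.norm.fun_pow 2))).intervalIntegrable _ _),
            intervalIntegral.integral_const_mul, intervalIntegral.integral_const_mul,
            hA2def, hQdef]
  have hABle : A2 + B2 ≤ (1 + C₁ ^ 2) * F2 := by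
    nlinarith [hAB, est2, est3, hQF, mul_le_mul_of_nonneg_left hQF
      (by positivity : (0:ℝ) ≤ C₁ ^ 2 / 2)]
  -- bound on T
  have hT : T ≤ 2 * B2 + 2 * F2 := by
    have hmono : T ≤ ∫ x in (0:ℝ)..R, (2 * (W x ^ 2 * ‖u x‖ ^ 2) + 2 * ‖f x‖ ^ 2) := by
      rw [hTdef]
      apply intervalIntegral.integral_mono_on hR0.le
        ((hcv'.norm.fun_pow 2).intervalIntegrable _ _)
        (((continuous_const.fun_mul ((hcW.fun_pow 2).fun_mul (hcu.norm.fun_pow 2))).fun_add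
          (continuous_const.fun_mul (hcf.norm.fun_pow 2))).intervalIntegrable _ _)
      intro x hx
      have h2 : 1 ≤ W x := hW1 x hx.1
      have hfx : deriv (deriv u) x = (W x : ℂ) * u x - f x := by
        simp only [hfdef]; ring
      have hnorm : ‖deriv (deriv u) x‖ ≤ W x * ‖u x‖ + ‖f x‖ := by
        rw [hfx]
        calc ‖(W x : ℂ) * u x - f x‖ ≤ ‖(W x : ℂ) * u x‖ + ‖f x‖ := norm_sub_le _ _
          _ = W x * ‖u x‖ + ‖f x‖ := by
              rw [norm_mul, Complex.norm_real, Real.norm_eq_abs,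
                abs_of_nonneg (by linarith)]
      nlinarith [norm_nonneg (deriv (deriv u) x), sq_nonneg (W x * ‖u x‖ - ‖f x‖),
        norm_nonneg (f x), mul_nonneg (mul_nonneg (by linarith : (0:ℝ) ≤ W x)
          (norm_nonneg (u x))) (norm_nonneg (f x))]
    calc T ≤ ∫ x in (0:ℝ)..R, (2 * (W x ^ 2 * ‖u x‖ ^ 2) + 2 * ‖f x‖ ^ 2) := hmono
      _ = 2 * B2 + 2 * F2 := by
          rw [intervalIntegral.integral_add
            ((continuous_const.fun_mul ((hcW.fun_pow 2).fun_mul (hcu.norm.fun_pow 2))).intervalIntegrable _ _)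
            ((continuous_const.fun_mul (hcf.norm.fun_pow 2)).intervalIntegrable _ _),
            intervalIntegral.integral_const_mul, intervalIntegral.integral_const_mul,
            hB2def, hF2def]
  -- conversion of the Ioi integrals
  have conv : ∀ h : ℝ → ℝ, Continuous h → HasCompactSupport h → (∀ x, R ≤ x → h x = 0) →
      ∫ x in Set.Ioi (0:ℝ), h x = ∫ x in (0:ℝ)..R, h x := by
    intro h hc hcs hz
    have hi : Integrable h := hc.integrable_of_hasCompactSupport hcs
    rw [intervalIntegral.integral_of_le hR0.le, ← Set.Ioc_union_Ioi_eq_Ioi hR0.le,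
      setIntegral_union (Set.Ioc_disjoint_Ioi le_rfl) measurableSet_Ioi
        hi.integrableOn hi.integrableOn,
      show (∫ x in Set.Ioi R, h x) = 0 from
        setIntegral_eq_zero_of_forall_eq_zero (fun x hx => hz x (le_of_lt hx)), add_zero]
  have e1 : (∫ x in Set.Ioi (0:ℝ), ‖deriv (deriv u) x‖ ^ 2) = T := by
    rw [hTdef]
    exact conv (fun x => ‖deriv (deriv u) x‖ ^ 2) (hcv'.norm.fun_pow 2)
      (hsupp.deriv.deriv.comp_left (g := fun z : ℂ => ‖z‖ ^ 2) (by simp))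
      (fun x hx => by simp [hv'R x hx])
  have e2 : (∫ x in Set.Ioi (0:ℝ), W x ^ 2 * ‖u x‖ ^ 2) = B2 := by
    rw [hB2def]
    exact conv (fun x => W x ^ 2 * ‖u x‖ ^ 2) ((hcW.fun_pow 2).fun_mul (hcu.norm.fun_pow 2))
      (HasCompactSupport.mul_left (hsupp.comp_left (g := fun z : ℂ => ‖z‖ ^ 2) (by simp)))
      (fun x hx => by simp [huR x hx])
  have e3 : (∫ x in Set.Ioi (0:ℝ), W x * ‖deriv u x‖ ^ 2) = A2 := by
    rw [hA2def]
    exact conv (fun x => W x * ‖deriv u x‖ ^ 2) (hcW.fun_mul (hcv.norm.fun_pow 2))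
      (HasCompactSupport.mul_left (hsupp.deriv.comp_left (g := fun z : ℂ => ‖z‖ ^ 2) (by simp)))
      (fun x hx => by simp [hvR x hx])
  have e4 : (∫ x in Set.Ioi (0:ℝ), ‖-deriv (deriv u) x + (W x : ℂ) * u x‖ ^ 2) = F2 := by
    rw [hF2def]
    exact conv (fun x => ‖f x‖ ^ 2) (hcf.norm.fun_pow 2)
      (hcsf.comp_left (g := fun z : ℂ => ‖z‖ ^ 2) (by simp))
      (fun x hx => by simp [hfR x hx])
  rw [e1, e2, e3, e4]
  -- final numeric assembly
  have key : ∀ X : ℝ, X ≤ M ^ 2 * F2 → Real.sqrt X ≤ M * Real.sqrt F2 := by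
    intro X hX
    calc Real.sqrt X ≤ Real.sqrt (M ^ 2 * F2) := Real.sqrt_le_sqrt hX
      _ = M * Real.sqrt F2 := by
          rw [Real.sqrt_mul (sq_nonneg M), Real.sqrt_sq hM0.le]
  have hTM : T ≤ M ^ 2 * F2 := by
    rw [hMsq]; nlinarith [hT, hABle, hA20, hF20]
  have hBM : B2 ≤ M ^ 2 * F2 := by
    rw [hMsq]; nlinarith [hABle, hA20, hF20, mul_nonneg (sq_nonneg C₁) hF20]
  have hAM : A2 ≤ M ^ 2 * F2 := by
    rw [hMsq]; nlinarith [hABle, hB20, hF20, mul_nonneg (sq_nonneg C₁) hF20]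
  have k1 := key T hTM
  have k2 := key B2 hBM
  have k3 := key A2 hAM
  linarith
end
end

section
/- Let W : ℝ → ℝ be continuous with W(x) ≥ 1 for all x ≥ 0, and let ψ : ℝ → ℂ be twice continuously differentiable on [0, ∞) with ψ(0) = 0, ∫₀^∞ |ψ(x)|² dx < ∞, and ψ''(x) = W(x) ψ(x) for all x ≥ 0. Then ψ(x) = 0 for all x ≥ 0. -/
open MeasureTheory

noncomputable section

/-- A square-integrable solution of `ψ'' = W ψ` on the
half-line with `W ≥ 1` and `ψ(0) = 0` vanishes identically on `[0, ∞)`. -/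
theorem no_L2_solution_halfline (W : ℝ → ℝ) (hWc : Continuous W)
    (hW1 : ∀ x : ℝ, 0 ≤ x → 1 ≤ W x)
    (ψ : ℝ → ℂ) (hψ : ContDiffOn ℝ 2 ψ (Set.Ici 0)) (hψ0 : ψ 0 = 0)
    (hψL2 : IntegrableOn (fun x => ‖ψ x‖ ^ 2) (Set.Ioi 0))
    (hode : ∀ x : ℝ, 0 ≤ x →
      iteratedDerivWithin 2 ψ (Set.Ici 0) x = (W x : ℂ) * ψ x) :
    ∀ x : ℝ, 0 ≤ x → ψ x = 0 := by
  have hsu : UniqueDiffOn ℝ (Set.Ici (0:ℝ)) := uniqueDiffOn_Ici 0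
  set v : ℝ → ℝ := fun x => (ψ x).re ^ 2 + (ψ x).im ^ 2 with hv
  have hnorm : ∀ z : ℂ, ‖z‖ ^ 2 = z.re ^ 2 + z.im ^ 2 := by
    intro z
    rw [Complex.sq_norm, Complex.normSq_apply]
    ring
  have hψdiff : ∀ y : ℝ, 0 < y → HasDerivAt ψ (deriv ψ y) y := fun y hy =>
    ((hψ.differentiableOn (by norm_num)).differentiableAt (Ici_mem_nhds hy)).hasDerivAt
  set Φ : ℝ → ℂ := derivWithin ψ (Set.Ici 0) with hΦ
  have hΦc : ContDiffOn ℝ 1 Φ (Set.Ici 0) := hψ.derivWithin hsu (by norm_num)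
  have hΦeq : ∀ y : ℝ, 0 < y → Φ y = deriv ψ y := fun y hy =>
    derivWithin_of_mem_nhds (Ici_mem_nhds hy)
  have hderiv2 : ∀ y : ℝ, 0 < y → HasDerivAt (deriv ψ) ((W y : ℂ) * ψ y) y := by
    intro y hy
    have h1 : DifferentiableAt ℝ Φ y :=
      (hΦc.differentiableOn one_ne_zero y hy.le).differentiableAt (Ici_mem_nhds hy)
    have h2 : deriv Φ y = (W y : ℂ) * ψ y := by
      rw [← hode y hy.le, iteratedDerivWithin_succ]
      have hcg : derivWithin (iteratedDerivWithin 1 ψ (Set.Ici 0)) (Set.Ici 0) y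
          = derivWithin Φ (Set.Ici 0) y :=
        derivWithin_congr (fun z hz => congrFun iteratedDerivWithin_one z)
          (congrFun iteratedDerivWithin_one y)
      rw [hcg, derivWithin_of_mem_nhds (Ici_mem_nhds hy)]
    have h3 : HasDerivAt Φ ((W y : ℂ) * ψ y) y := by rw [← h2]; exact h1.hasDerivAt
    apply h3.congr_of_eventuallyEq
    filter_upwards [eventually_gt_nhds hy] with z hz
    exact (hΦeq z hz).symm
  have hre : ∀ y : ℝ, 0 < y → HasDerivAt (fun x => (ψ x).re) (deriv ψ y).re y := fun y hy =>
    Complex.reCLM.hasFDerivAt.comp_hasDerivAt y (hψdiff y hy)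
  have him : ∀ y : ℝ, 0 < y → HasDerivAt (fun x => (ψ x).im) (deriv ψ y).im y := fun y hy =>
    Complex.imCLM.hasFDerivAt.comp_hasDerivAt y (hψdiff y hy)
  set v1 : ℝ → ℝ := fun x =>
    2 * ((ψ x).re * (deriv ψ x).re + (ψ x).im * (deriv ψ x).im) with hv1
  set v2 : ℝ → ℝ := fun x =>
    2 * ((deriv ψ x).re ^ 2 + (deriv ψ x).im ^ 2)
      + 2 * W x * ((ψ x).re ^ 2 + (ψ x).im ^ 2) with hv2
  have hvderiv : ∀ y : ℝ, 0 < y → HasDerivAt v (v1 y) y := by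
    intro y hy
    have h := ((hre y hy).pow 2).add ((him y hy).pow 2)
    refine h.congr_deriv ?_
    simp [hv1]
    ring
  have hre' : ∀ y : ℝ, 0 < y →
      HasDerivAt (fun x => (deriv ψ x).re) (((W y : ℂ) * ψ y).re) y := fun y hy =>
    Complex.reCLM.hasFDerivAt.comp_hasDerivAt y (hderiv2 y hy)
  have him' : ∀ y : ℝ, 0 < y →
      HasDerivAt (fun x => (deriv ψ x).im) (((W y : ℂ) * ψ y).im) y := fun y hy =>
    Complex.imCLM.hasFDerivAt.comp_hasDerivAt y (hderiv2 y hy)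
  have hv1deriv : ∀ y : ℝ, 0 < y → HasDerivAt v1 (v2 y) y := by
    intro y hy
    have h := (((hre y hy).mul (hre' y hy)).add ((him y hy).mul (him' y hy))).const_mul 2
    refine h.congr_deriv ?_
    simp [hv2, Complex.mul_re, Complex.ofReal_re, Complex.ofReal_im]
    ring
  have hv2nonneg : ∀ y : ℝ, 0 < y → 0 ≤ v2 y := by
    intro y hy
    have hW : (0:ℝ) ≤ W y := le_trans zero_le_one (hW1 y hy.le)
    have h1 : (0:ℝ) ≤ (deriv ψ y).re ^ 2 + (deriv ψ y).im ^ 2 := by positivity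
    have h2 : (0:ℝ) ≤ (ψ y).re ^ 2 + (ψ y).im ^ 2 := by positivity
    simp only [hv2]
    nlinarith
  have hvcont : ContinuousOn v (Set.Ici 0) := by
    have hc := hψ.continuousOn
    exact ((Complex.continuous_re.comp_continuousOn hc).pow 2).add
      ((Complex.continuous_im.comp_continuousOn hc).pow 2)
  have hvconv : ConvexOn ℝ (Set.Ici 0) v := by
    apply convexOn_of_hasDerivWithinAt2_nonneg (convex_Ici 0) hvcont
      (f' := v1) (f'' := v2)
    · intro x hx
      rw [interior_Ici] at hx
      exact (hvderiv x hx).hasDerivWithinAt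
    · intro x hx
      rw [interior_Ici] at hx
      exact (hv1deriv x hx).hasDerivWithinAt
    · intro x hx
      rw [interior_Ici] at hx
      exact hv2nonneg x hx
  have hvL2 : IntegrableOn v (Set.Ioi 0) := by
    have heq : (fun x => ‖ψ x‖ ^ 2) = v := by funext x; exact hnorm (ψ x)
    rwa [heq] at hψL2
  have hv00 : v 0 = 0 := by simp [hv, hψ0]
  have hv0 : ∀ y : ℝ, 0 ≤ y → v y = 0 := by
    intro y hy
    by_contra hne
    have hvy : 0 < v y := lt_of_le_of_ne (by positivity) (Ne.symm hne)
    have hy0 : 0 < y := by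
      rcases hy.lt_or_eq with h | h
      · exact h
      · exact absurd (by rw [← h]; exact hv00) hne
    have hbound : ∀ x : ℝ, y < x → v y ≤ v x := by
      intro x hx
      have h0x : (0:ℝ) < x := hy0.trans hx
      have ha : (0:ℝ) ≤ 1 - y / x := by
        have : y / x ≤ 1 := (div_le_one h0x).mpr hx.le
        linarith
      have hb : (0:ℝ) ≤ y / x := by positivity
      have hab : (1 - y / x) + y / x = 1 := by ring
      have hcomb := hvconv.2 (Set.self_mem_Ici (a := (0:ℝ)))
        (Set.mem_Ici.mpr h0x.le) ha hb hab
      have hpt : (1 - y / x) • (0:ℝ) + (y / x) • x = y := by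
        rw [smul_eq_mul, smul_eq_mul]
        field_simp
        ring
      rw [hpt] at hcomb
      rw [smul_eq_mul, smul_eq_mul, hv00] at hcomb
      have hvx : 0 ≤ v x := by positivity
      have hyx1 : y / x ≤ 1 := (div_le_one h0x).mpr hx.le
      have hmul : y / x * v x ≤ v x := mul_le_of_le_one_left hvx hyx1
      simp only [mul_zero, zero_add] at hcomb
      exact hcomb.trans hmul
    have hint : IntegrableOn v (Set.Ioi y) :=
      hvL2.mono_set (Set.Ioi_subset_Ioi hy0.le)
    have hfin := hint.measure_ge_lt_top hvy
    have hsub : Set.Ioi y ⊆ {x | v y ≤ v x} := fun x hx => hbound x hx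
    have h1 : (volume.restrict (Set.Ioi y)) (Set.Ioi y) = ⊤ := by
      rw [Measure.restrict_apply measurableSet_Ioi]
      simp [Real.volume_Ioi]
    have htop : (volume.restrict (Set.Ioi y)) {x | v y ≤ v x} = ⊤ :=
      top_le_iff.mp (h1 ▸ measure_mono hsub)
    rw [htop] at hfin
    exact lt_irrefl _ hfin
  intro x hx
  have h : (ψ x).re ^ 2 + (ψ x).im ^ 2 = 0 := hv0 x hx
  have h1 : (ψ x).re = 0 := by nlinarith [sq_nonneg (ψ x).re, sq_nonneg (ψ x).im]
  have h2 : (ψ x).im = 0 := by nlinarith [sq_nonneg (ψ x).re, sq_nonneg (ψ x).im]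
  exact Complex.ext (by simpa using h1) (by simpa using h2)
end
end
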